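/- arXiv:1410.3325 — 3 statements merged into one kernel-verified Lean document; each statement's English description precedes it below -/
import Mathlib

section
/- Let R_ℓ be the free unital associative 𝔽-algebra on x₁,…,x_ℓ with partial derivatives ∂/∂x_i. For f ∈ R_ℓ: m((∂f/∂x_i)^σ) = 0 for all i = 1,…,ℓ if and only if f ∈ 𝔽·1 + [R_ℓ, R_ℓ]. -/
open TensorProduct LinearMap

section DPA

variable (𝔽 : Type) [Field 𝔽] (V : Type) [Ring V] [Algebra 𝔽 V]

/-- The swap `(u ⊗ v)^σ = v ⊗ u` on `V ⊗ V`. -/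
noncomputable abbrev swap2 : V ⊗[𝔽] V ≃ₗ[𝔽] V ⊗[𝔽] V := TensorProduct.comm 𝔽 V V

/-- The cyclic permutation `(u ⊗ v ⊗ w)^σ = w ⊗ u ⊗ v` on `V ⊗ V ⊗ V = (V ⊗ V) ⊗ V`. -/
noncomputable def sigma3 : (V ⊗[𝔽] V) ⊗[𝔽] V ≃ₗ[𝔽] (V ⊗[𝔽] V) ⊗[𝔽] V :=
  (TensorProduct.comm 𝔽 (V ⊗[𝔽] V) V).trans (TensorProduct.assoc 𝔽 V V V).symm

/-- Left multiplication `a · (u ⊗ v) = (a*u) ⊗ v` (outer bimodule structure). -/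
noncomputable def lact2 (a : V) : V ⊗[𝔽] V →ₗ[𝔽] V ⊗[𝔽] V :=
  LinearMap.rTensor V (LinearMap.mulLeft 𝔽 a)

/-- Right multiplication `(u ⊗ v) · c = u ⊗ (v*c)` (outer bimodule structure). -/
noncomputable def ract2 (c : V) : V ⊗[𝔽] V →ₗ[𝔽] V ⊗[𝔽] V :=
  LinearMap.lTensor V (LinearMap.mulRight 𝔽 c)

/-- `(u ⊗ v) ⋆₁ b = (u*b) ⊗ v`. -/
noncomputable def star1r (b : V) : V ⊗[𝔽] V →ₗ[𝔽] V ⊗[𝔽] V :=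
  LinearMap.rTensor V (LinearMap.mulRight 𝔽 b)

/-- `a ⋆₁ (u ⊗ v) = u ⊗ (a*v)`. -/
noncomputable def star1l (a : V) : V ⊗[𝔽] V →ₗ[𝔽] V ⊗[𝔽] V :=
  LinearMap.lTensor V (LinearMap.mulLeft 𝔽 a)

/-- The `•`-product on `V ⊗ V`:  `(u ⊗ v) • (x ⊗ y) = (u*x) ⊗ (y*v)`
(the multiplication of `V ⊗ Vᵒᵖ`). -/
noncomputable def bullet : V ⊗[𝔽] V →ₗ[𝔽] V ⊗[𝔽] V →ₗ[𝔽] V ⊗[𝔽] V :=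
  TensorProduct.lift
    (((TensorProduct.mapBilinear (RingHom.id 𝔽) V V V V).comp (LinearMap.mul 𝔽 V)).compl₂
      ((LinearMap.mul 𝔽 V).flip))

/-- A `2`-fold bracket on `V`: an `𝔽`-bilinear map `V × V → V ⊗ V` satisfying the two
Leibniz rules `{{a,bc}} = {{a,b}}·c + b·{{a,c}}` and `{{ab,c}} = {{a,c}} ⋆₁ b + a ⋆₁ {{b,c}}`. -/
def IsDoubleBracket (Br : V →ₗ[𝔽] V →ₗ[𝔽] V ⊗[𝔽] V) : Prop :=
  (∀ a b c : V, Br a (b * c) = ract2 𝔽 V c (Br a b) + lact2 𝔽 V b (Br a c)) ∧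
  (∀ a b c : V, Br (a * b) c = star1r 𝔽 V b (Br a c) + star1l 𝔽 V a (Br b c))

variable {𝔽 V}

/-- `{{a, B}}_L` : apply the bracket to the first tensor factor. -/
noncomputable def brL (Br : V →ₗ[𝔽] V →ₗ[𝔽] V ⊗[𝔽] V) (a : V) :
    V ⊗[𝔽] V →ₗ[𝔽] (V ⊗[𝔽] V) ⊗[𝔽] V :=
  LinearMap.rTensor V (Br a)

/-- `{{a, B}}_R` : apply the bracket to the second tensor factor. -/
noncomputable def brR (Br : V →ₗ[𝔽] V →ₗ[𝔽] V ⊗[𝔽] V) (a : V) :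
    V ⊗[𝔽] V →ₗ[𝔽] (V ⊗[𝔽] V) ⊗[𝔽] V :=
  (TensorProduct.assoc 𝔽 V V V).symm.toLinearMap ∘ₗ LinearMap.lTensor V (Br a)

variable (𝔽 V)

/-- `ρ₂` : swap the last two tensor factors of `V ⊗ V ⊗ V`. -/
noncomputable def rho2 : (V ⊗[𝔽] V) ⊗[𝔽] V ≃ₗ[𝔽] (V ⊗[𝔽] V) ⊗[𝔽] V :=
  (TensorProduct.assoc 𝔽 V V V).trans
    ((TensorProduct.congr (LinearEquiv.refl 𝔽 V) (TensorProduct.comm 𝔽 V V)).trans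
      (TensorProduct.assoc 𝔽 V V V).symm)

variable {𝔽 V}

/-- Conjugated bullet action used to define the actions `•ᵢ` of `V ⊗ V` on `V ⊗ V ⊗ V`. -/
noncomputable def conjAct (β : V ⊗[𝔽] V →ₗ[𝔽] V ⊗[𝔽] V →ₗ[𝔽] V ⊗[𝔽] V)
    (ρ : (V ⊗[𝔽] V) ⊗[𝔽] V ≃ₗ[𝔽] (V ⊗[𝔽] V) ⊗[𝔽] V) :
    V ⊗[𝔽] V →ₗ[𝔽] (V ⊗[𝔽] V) ⊗[𝔽] V →ₗ[𝔽] (V ⊗[𝔽] V) ⊗[𝔽] V :=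
  (LinearMap.lcomp 𝔽 _ ρ.toLinearMap) ∘ₗ
    (LinearMap.llcomp 𝔽 ((V ⊗[𝔽] V) ⊗[𝔽] V) ((V ⊗[𝔽] V) ⊗[𝔽] V) ((V ⊗[𝔽] V) ⊗[𝔽] V)
      ρ.symm.toLinearMap) ∘ₗ
    (LinearMap.rTensorHom V) ∘ₗ β

variable (𝔽 V)

/-- The right action `X •₁ A`, i.e. `(x⊗y⊗z) •₁ (a⊗b) = x⊗(y*a)⊗(b*z)`;
`bAct1R A X = X •₁ A`. -/
noncomputable def bAct1R : V ⊗[𝔽] V →ₗ[𝔽] (V ⊗[𝔽] V) ⊗[𝔽] V →ₗ[𝔽] (V ⊗[𝔽] V) ⊗[𝔽] V :=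
  conjAct (bullet 𝔽 V).flip ((sigma3 𝔽 V).trans (sigma3 𝔽 V))

/-- The left action `A •₂ X`, i.e. `(a⊗b) •₂ (x⊗y⊗z) = (a*x)⊗y⊗(z*b)`. -/
noncomputable def bAct2L : V ⊗[𝔽] V →ₗ[𝔽] (V ⊗[𝔽] V) ⊗[𝔽] V →ₗ[𝔽] (V ⊗[𝔽] V) ⊗[𝔽] V :=
  conjAct (bullet 𝔽 V) (rho2 𝔽 V)

/-- The right action `X •₃ A`, i.e. `(x⊗y⊗z) •₃ (a⊗b) = (x*a)⊗(b*y)⊗z`;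
`bAct3R A X = X •₃ A`. -/
noncomputable def bAct3R : V ⊗[𝔽] V →ₗ[𝔽] (V ⊗[𝔽] V) ⊗[𝔽] V →ₗ[𝔽] (V ⊗[𝔽] V) ⊗[𝔽] V :=
  conjAct (bullet 𝔽 V).flip (LinearEquiv.refl 𝔽 ((V ⊗[𝔽] V) ⊗[𝔽] V))

/-- `a ⋆₁ (x⊗y⊗z) = x⊗(a*y)⊗z`. -/
noncomputable def slot2L (a : V) : (V ⊗[𝔽] V) ⊗[𝔽] V →ₗ[𝔽] (V ⊗[𝔽] V) ⊗[𝔽] V :=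
  LinearMap.rTensor V (LinearMap.lTensor V (LinearMap.mulLeft 𝔽 a))

/-- `(x⊗y⊗z) ⋆₁ b = x⊗(y*b)⊗z`. -/
noncomputable def slot2R (b : V) : (V ⊗[𝔽] V) ⊗[𝔽] V →ₗ[𝔽] (V ⊗[𝔽] V) ⊗[𝔽] V :=
  LinearMap.rTensor V (LinearMap.lTensor V (LinearMap.mulRight 𝔽 b))

/-- `a ⋆₂ (x⊗y⊗z) = x⊗y⊗(a*z)`. -/
noncomputable def slot3L (a : V) : (V ⊗[𝔽] V) ⊗[𝔽] V →ₗ[𝔽] (V ⊗[𝔽] V) ⊗[𝔽] V :=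
  LinearMap.lTensor (V ⊗[𝔽] V) (LinearMap.mulLeft 𝔽 a)

/-- `(x⊗y⊗z) ⋆₂ b = (x*b)⊗y⊗z`. -/
noncomputable def slot1R (b : V) : (V ⊗[𝔽] V) ⊗[𝔽] V →ₗ[𝔽] (V ⊗[𝔽] V) ⊗[𝔽] V :=
  LinearMap.rTensor V (LinearMap.rTensor V (LinearMap.mulRight 𝔽 b))

/-- outer left: `a · (x⊗y⊗z) = (a*x)⊗y⊗z`. -/
noncomputable def slot1L (a : V) : (V ⊗[𝔽] V) ⊗[𝔽] V →ₗ[𝔽] (V ⊗[𝔽] V) ⊗[𝔽] V :=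
  LinearMap.rTensor V (LinearMap.rTensor V (LinearMap.mulLeft 𝔽 a))

/-- outer right: `(x⊗y⊗z) · b = x⊗y⊗(z*b)`. -/
noncomputable def slot3R (b : V) : (V ⊗[𝔽] V) ⊗[𝔽] V →ₗ[𝔽] (V ⊗[𝔽] V) ⊗[𝔽] V :=
  LinearMap.lTensor (V ⊗[𝔽] V) (LinearMap.mulRight 𝔽 b)

variable {𝔽 V}

/-- The triple bracket `{{a,b,c}}`. -/
noncomputable def triple (Br : V →ₗ[𝔽] V →ₗ[𝔽] V ⊗[𝔽] V) (a b c : V) :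
    (V ⊗[𝔽] V) ⊗[𝔽] V :=
  brL Br a (Br b c) + sigma3 𝔽 V (brL Br b (Br c a)) +
    sigma3 𝔽 V (sigma3 𝔽 V (brL Br c (Br a b)))

variable (𝔽 V)

/-- Skewsymmetry of a 2-fold bracket. -/
def IsSkew (Br : V →ₗ[𝔽] V →ₗ[𝔽] V ⊗[𝔽] V) : Prop :=
  ∀ a b : V, Br a b = - swap2 𝔽 V (Br b a)

/-- The span of commutators `[V,V]`. -/
def commSub : Submodule 𝔽 V := Submodule.span 𝔽 {x : V | ∃ a b : V, x = a * b - b * a}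

variable {𝔽 V}

/-- The associated bracket `{a,b} = m {{a,b}}`. -/
noncomputable def sb (Br : V →ₗ[𝔽] V →ₗ[𝔽] V ⊗[𝔽] V) (a b : V) : V :=
  LinearMap.mul' 𝔽 V (Br a b)

/-- A 2-fold derivation: `D(ab) = (Da)·b + a·(Db)`. -/
def Is2Deriv (D : V →ₗ[𝔽] V ⊗[𝔽] V) : Prop :=
  ∀ a b : V, D (a * b) = ract2 𝔽 V b (D a) + lact2 𝔽 V a (D b)

/-- `D` and `E` strongly commute: `D_L ∘ E = E_R ∘ D`. -/
def StronglyComm (D E : V →ₗ[𝔽] V ⊗[𝔽] V) : Prop :=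
  ∀ f : V, LinearMap.rTensor V D (E f) =
    (TensorProduct.assoc 𝔽 V V V).symm (LinearMap.lTensor V E (D f))



namespace St16
open TensorProduct LinearMap FreeAlgebra Finset

section gen
variable (𝔽 : Type) [Field 𝔽] (V : Type) [Ring V] [Algebra 𝔽 V]

/-- `Jm a (u ⊗ v) = v * a * u`. -/
noncomputable def Jm (a : V) : V ⊗[𝔽] V →ₗ[𝔽] V :=
  (LinearMap.mul' 𝔽 V) ∘ₗ (LinearMap.lTensor V (LinearMap.mulLeft 𝔽 a)) ∘ₗ
    (TensorProduct.comm 𝔽 V V).toLinearMap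

variable {𝔽 V}

@[simp] lemma Jm_tmul (a u v : V) : Jm 𝔽 V a (u ⊗ₜ v) = v * (a * u) := by
  simp [Jm]

lemma Jm_one_apply (X : V ⊗[𝔽] V) :
    Jm 𝔽 V 1 X = LinearMap.mul' 𝔽 V (TensorProduct.comm 𝔽 V V X) := by
  induction X using TensorProduct.induction_on with
  | zero => simp
  | tmul u v => simp
  | add x y hx hy => simp [map_add, hx, hy]

lemma Jm_ract2 (a c : V) (X : V ⊗[𝔽] V) :
    Jm 𝔽 V a (ract2 𝔽 V c X) = Jm 𝔽 V (c * a) X := by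
  induction X using TensorProduct.induction_on with
  | zero => simp
  | tmul u v => simp [ract2, mul_assoc]
  | add x y hx hy => simp [map_add, hx, hy]

lemma Jm_lact2 (a b : V) (X : V ⊗[𝔽] V) :
    Jm 𝔽 V a (lact2 𝔽 V b X) = Jm 𝔽 V (a * b) X := by
  induction X using TensorProduct.induction_on with
  | zero => simp
  | tmul u v => simp [lact2, mul_assoc]
  | add x y hx hy => simp [map_add, hx, hy]

lemma D_one {Dm : V →ₗ[𝔽] V ⊗[𝔽] V} (h : Is2Deriv Dm) : Dm 1 = 0 := by
  have h1 := h 1 1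
  rw [mul_one] at h1
  have hr : ract2 𝔽 V (1 : V) (Dm 1) = Dm 1 := by
    simp [ract2]
  have hl : lact2 𝔽 V (1 : V) (Dm 1) = Dm 1 := by
    simp [lact2]
  rw [hr, hl] at h1
  have : Dm 1 + Dm 1 = Dm 1 + 0 := by rw [add_zero]; exact h1.symm
  exact (add_left_cancel this)

lemma Jm_D_comm {Dm : V →ₗ[𝔽] V ⊗[𝔽] V} (h : Is2Deriv Dm) (a b : V) :
    Jm 𝔽 V 1 (Dm (a * b - b * a)) = 0 := by
  rw [map_sub, map_sub, h a b, h b a, map_add, map_add]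
  rw [Jm_ract2, Jm_lact2, Jm_ract2, Jm_lact2]
  rw [one_mul, one_mul, mul_one, mul_one]
  abel

end gen

section free
variable {𝔽 : Type} [Field 𝔽] {ℓ : ℕ}

/-- monomial word -/
noncomputable def word (𝔽 : Type) [Field 𝔽] {ℓ : ℕ} (l : List (Fin ℓ)) :
    FreeAlgebra 𝔽 (Fin ℓ) :=
  (l.map (FreeAlgebra.ι 𝔽)).prod

@[simp] lemma word_nil : word 𝔽 ([] : List (Fin ℓ)) = 1 := rfl

@[simp] lemma word_cons (k : Fin ℓ) (t : List (Fin ℓ)) :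
    word 𝔽 (k :: t) = FreeAlgebra.ι 𝔽 k * word 𝔽 t := by
  simp [word]

lemma word_append (u v : List (Fin ℓ)) :
    word 𝔽 (u ++ v) = word 𝔽 u * word 𝔽 v := by
  simp [word]

lemma equiv_word (l : List (Fin ℓ)) :
    FreeAlgebra.equivMonoidAlgebraFreeMonoid (word 𝔽 l)
      = MonoidAlgebra.single (FreeMonoid.ofList l) (1 : 𝔽) := by
  induction l with
  | nil =>
      show FreeAlgebra.equivMonoidAlgebraFreeMonoid (1 : FreeAlgebra 𝔽 (Fin ℓ)) = _
      rw [map_one]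
      rfl
  | cons k t ih =>
      rw [word_cons, map_mul, ih]
      have hk : FreeAlgebra.equivMonoidAlgebraFreeMonoid (FreeAlgebra.ι 𝔽 k)
          = MonoidAlgebra.single (FreeMonoid.of k) (1 : 𝔽) := by
        simp [FreeAlgebra.equivMonoidAlgebraFreeMonoid]
      rw [hk, MonoidAlgebra.single_mul_single, one_mul]
      rfl

lemma basis_eq_word (w : FreeMonoid (Fin ℓ)) :
    FreeAlgebra.basisFreeMonoid 𝔽 (Fin ℓ) w = word 𝔽 w.toList := by
  have hb : FreeAlgebra.basisFreeMonoid 𝔽 (Fin ℓ) w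
      = FreeAlgebra.equivMonoidAlgebraFreeMonoid.symm (MonoidAlgebra.single w 1) := by
    simp [FreeAlgebra.basisFreeMonoid]
  rw [hb]
  apply (FreeAlgebra.equivMonoidAlgebraFreeMonoid (R := 𝔽) (X := Fin ℓ)).injective
  rw [AlgEquiv.apply_symm_apply, equiv_word]
  rfl

variable (D : Fin ℓ → (FreeAlgebra 𝔽 (Fin ℓ) →ₗ[𝔽]
    FreeAlgebra 𝔽 (Fin ℓ) ⊗[𝔽] FreeAlgebra 𝔽 (Fin ℓ)))

/-- `Umap a f = ∑ i, xᵢ * Jm a (D i f)`. -/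
noncomputable def Umap (a : FreeAlgebra 𝔽 (Fin ℓ)) :
    FreeAlgebra 𝔽 (Fin ℓ) →ₗ[𝔽] FreeAlgebra 𝔽 (Fin ℓ) :=
  ∑ i : Fin ℓ, (LinearMap.mulLeft 𝔽 (FreeAlgebra.ι 𝔽 i)) ∘ₗ (Jm 𝔽 _ a) ∘ₗ D i

variable (hD : ∀ i, Is2Deriv (D i))
variable (hgen : ∀ i k, D i (FreeAlgebra.ι 𝔽 k) =
      if i = k then (1 : FreeAlgebra 𝔽 (Fin ℓ)) ⊗ₜ[𝔽] (1 : FreeAlgebra 𝔽 (Fin ℓ)) else 0)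

include hD in
lemma Umap_one (a : FreeAlgebra 𝔽 (Fin ℓ)) : Umap D a 1 = 0 := by
  simp [Umap, LinearMap.sum_apply, D_one (hD _)]

include hD hgen in
lemma Umap_mul_gen (a : FreeAlgebra 𝔽 (Fin ℓ)) (k : Fin ℓ) (g : FreeAlgebra 𝔽 (Fin ℓ)) :
    Umap D a (FreeAlgebra.ι 𝔽 k * g)
      = FreeAlgebra.ι 𝔽 k * (g * a) + Umap D (a * FreeAlgebra.ι 𝔽 k) g := by
  simp only [Umap, LinearMap.sum_apply, LinearMap.comp_apply]
  have key : ∀ i : Fin ℓ, Jm 𝔽 _ a (D i (FreeAlgebra.ι 𝔽 k * g))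
      = (if i = k then g * a else 0) + Jm 𝔽 _ (a * FreeAlgebra.ι 𝔽 k) (D i g) := by
    intro i
    rw [hD i (FreeAlgebra.ι 𝔽 k) g, map_add, Jm_lact2, hgen i k]
    congr 1
    by_cases h : i = k
    · simp [h, Jm_ract2]
    · simp [h]
  simp only [key, map_add, mul_add]
  rw [Finset.sum_add_distrib]
  congr 1
  rw [Finset.sum_congr rfl (fun i _ => by
    rw [LinearMap.mulLeft_apply, mul_ite, mul_zero])]
  simp

include hD hgen in
lemma Umap_word (l : List (Fin ℓ)) (a : FreeAlgebra 𝔽 (Fin ℓ)) :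
    Umap D a (word 𝔽 l)
      = ∑ j ∈ Finset.range l.length, word 𝔽 (l.drop j) * a * word 𝔽 (l.take j) := by
  induction l generalizing a with
  | nil => simp [Umap_one D hD]
  | cons k t ih =>
      rw [word_cons, Umap_mul_gen D hD hgen, ih]
      rw [List.length_cons, Finset.sum_range_succ', add_comm]
      congr 1
      · apply Finset.sum_congr rfl
        intro j _
        rw [List.drop_succ_cons, List.take_succ_cons, word_cons]
        simp [mul_assoc]
      · simp [word_cons, mul_assoc]

lemma rot_sub_mem (l : List (Fin ℓ)) (j : ℕ) :
    word 𝔽 (l.drop j ++ l.take j) - word 𝔽 l ∈ commSub 𝔽 (FreeAlgebra 𝔽 (Fin ℓ)) := by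
  have h1 : word 𝔽 l = word 𝔽 (l.take j) * word 𝔽 (l.drop j) := by
    conv_lhs => rw [← List.take_append_drop j l]
    exact word_append _ _
  rw [h1, word_append]
  exact Submodule.subset_span ⟨word 𝔽 (l.drop j), word 𝔽 (l.take j), rfl⟩

lemma rot_length (l : List (Fin ℓ)) {j : ℕ} (hj : j < l.length) :
    (l.drop j ++ l.take j).length = l.length := by
  simp only [List.length_append, List.length_drop, List.length_take]
  omega

/-- Scale basis words by their length. -/
noncomputable def Nmap : FreeAlgebra 𝔽 (Fin ℓ) →ₗ[𝔽] FreeAlgebra 𝔽 (Fin ℓ) :=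
  (FreeAlgebra.basisFreeMonoid 𝔽 (Fin ℓ)).constr 𝔽 fun w =>
    ((FreeMonoid.toList w).length : 𝔽) • FreeAlgebra.basisFreeMonoid 𝔽 (Fin ℓ) w

/-- Average of the cyclic rotations of each basis word. -/
noncomputable def Pmap : FreeAlgebra 𝔽 (Fin ℓ) →ₗ[𝔽] FreeAlgebra 𝔽 (Fin ℓ) :=
  (FreeAlgebra.basisFreeMonoid 𝔽 (Fin ℓ)).constr 𝔽 fun w =>
    if (FreeMonoid.toList w).length = 0 then 1 else
      ((FreeMonoid.toList w).length : 𝔽)⁻¹ •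
        ∑ j ∈ Finset.range (FreeMonoid.toList w).length,
          word 𝔽 ((FreeMonoid.toList w).drop j ++ (FreeMonoid.toList w).take j)

lemma Nmap_word (l : List (Fin ℓ)) :
    Nmap (word 𝔽 l) = (l.length : 𝔽) • word 𝔽 l := by
  have h := Module.Basis.constr_basis (FreeAlgebra.basisFreeMonoid 𝔽 (Fin ℓ)) 𝔽
    (fun w => ((FreeMonoid.toList w).length : 𝔽) • FreeAlgebra.basisFreeMonoid 𝔽 (Fin ℓ) w)
    (FreeMonoid.ofList l)
  rw [basis_eq_word] at h
  have ht : FreeMonoid.toList (FreeMonoid.ofList l) = l := rfl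
  rw [ht] at h
  exact h

lemma toList_one : FreeMonoid.toList (1 : FreeMonoid (Fin ℓ)) = [] := rfl

lemma eq_one_of_toList_nil {w : FreeMonoid (Fin ℓ)} (h : FreeMonoid.toList w = []) :
    w = 1 := by
  have : FreeMonoid.ofList (FreeMonoid.toList w) = w := rfl
  rw [h] at this
  exact this.symm

lemma basis_one : (FreeAlgebra.basisFreeMonoid 𝔽 (Fin ℓ)) 1 = 1 := by
  rw [basis_eq_word, toList_one, word_nil]

include hD hgen in
lemma NP_eq_U [CharZero 𝔽] :
    Nmap ∘ₗ (Pmap (𝔽 := 𝔽) (ℓ := ℓ)) = Umap D 1 := by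
  apply Module.Basis.ext (FreeAlgebra.basisFreeMonoid 𝔽 (Fin ℓ))
  intro w
  rw [LinearMap.comp_apply, Pmap, Module.Basis.constr_basis, basis_eq_word]
  set l := FreeMonoid.toList w with hl
  rw [Umap_word D hD hgen]
  by_cases h0 : l.length = 0
  · rw [if_pos h0]
    rw [List.length_eq_zero_iff] at h0
    have : Nmap (1 : FreeAlgebra 𝔽 (Fin ℓ)) = 0 := by
      have := Nmap_word (𝔽 := 𝔽) ([] : List (Fin ℓ))
      simpa using this
    rw [this, h0]
    simp
  · rw [if_neg h0, map_smul, map_sum]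
    have hterm : ∀ j ∈ Finset.range l.length,
        Nmap (word 𝔽 (l.drop j ++ l.take j)) = (l.length : 𝔽) • word 𝔽 (l.drop j ++ l.take j) := by
      intro j hj
      rw [Nmap_word, rot_length l (Finset.mem_range.mp hj)]
    rw [Finset.sum_congr rfl hterm, ← Finset.smul_sum, smul_smul,
      inv_mul_cancel₀ (by exact_mod_cast h0), one_smul]
    apply Finset.sum_congr rfl
    intro j _
    rw [word_append, mul_one]

lemma repr_Nmap (h : FreeAlgebra 𝔽 (Fin ℓ)) (w : FreeMonoid (Fin ℓ)) :
    (FreeAlgebra.basisFreeMonoid 𝔽 (Fin ℓ)).repr (Nmap h) w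
      = ((FreeMonoid.toList w).length : 𝔽) *
        (FreeAlgebra.basisFreeMonoid 𝔽 (Fin ℓ)).repr h w := by
  classical
  set b := FreeAlgebra.basisFreeMonoid 𝔽 (Fin ℓ) with hbdef
  let φ : FreeAlgebra 𝔽 (Fin ℓ) →ₗ[𝔽] 𝔽 :=
    { toFun := fun h => b.repr (Nmap h) w
      map_add' := by intro x y; simp
      map_smul' := by intro c x; simp }
  let ψ : FreeAlgebra 𝔽 (Fin ℓ) →ₗ[𝔽] 𝔽 :=
    { toFun := fun h => ((FreeMonoid.toList w).length : 𝔽) * b.repr h w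
      map_add' := by intro x y; simp [mul_add]
      map_smul' := by intro c x; simp; ring }
  have key : φ = ψ := by
    apply Module.Basis.ext b
    intro v
    show b.repr (Nmap (b v)) w = ((FreeMonoid.toList w).length : 𝔽) * b.repr (b v) w
    rw [Nmap, hbdef, Module.Basis.constr_basis, map_smul, Module.Basis.repr_self]
    simp only [Finsupp.smul_apply, Finsupp.single_apply, smul_eq_mul]
    by_cases hv : v = w
    · subst hv; simp
    · simp [hv]
  exact congrArg (fun φ' => φ' h) key

include hD hgen in
lemma Pmap_mem_span [CharZero 𝔽] (f : FreeAlgebra 𝔽 (Fin ℓ))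
    (hU : Umap D 1 f = 0) :
    Pmap f ∈ Submodule.span 𝔽 {(1 : FreeAlgebra 𝔽 (Fin ℓ))} := by
  set b := FreeAlgebra.basisFreeMonoid 𝔽 (Fin ℓ)
  have hNP : Nmap (Pmap f) = 0 := by
    have := congrArg (fun φ => φ f) (NP_eq_U D hD hgen)
    simp only [LinearMap.comp_apply] at this
    rw [this, hU]
  have hcoord : ∀ w : FreeMonoid (Fin ℓ), w ≠ 1 → b.repr (Pmap f) w = 0 := by
    intro w hw
    have h1 := repr_Nmap (Pmap f) w
    rw [hNP, map_zero] at h1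
    have h2 : ((FreeMonoid.toList w).length : 𝔽) ≠ 0 := by
      have hnil : FreeMonoid.toList w ≠ [] := fun h => hw (eq_one_of_toList_nil h)
      have hlen : (FreeMonoid.toList w).length ≠ 0 := fun hc => hnil (List.length_eq_zero_iff.mp hc)
      exact_mod_cast hlen
    have := h1.symm
    rcases mul_eq_zero.mp this with h | h
    · exact absurd h h2
    · exact h
  obtain ⟨c, hc⟩ : ∃ c, b.repr (Pmap f) = Finsupp.single 1 c := by
    classical
    refine ⟨b.repr (Pmap f) 1, ?_⟩
    ext w
    rw [Finsupp.single_apply]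
    by_cases hw : (1 : FreeMonoid (Fin ℓ)) = w
    · rw [if_pos hw, ← hw]
    · rw [if_neg hw, hcoord w (fun h => hw h.symm)]
  have hPf : Pmap f = c • (1 : FreeAlgebra 𝔽 (Fin ℓ)) := by
    have htot := b.repr.symm_apply_apply (Pmap f)
    rw [hc] at htot
    rw [← htot, Module.Basis.repr_symm_apply, Finsupp.linearCombination_single, basis_one]
  rw [hPf]
  exact Submodule.smul_mem _ _ (Submodule.mem_span_singleton_self _)

lemma sub_Pmap_mem [CharZero 𝔽] (f : FreeAlgebra 𝔽 (Fin ℓ)) :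
    f - Pmap f ∈ commSub 𝔽 (FreeAlgebra 𝔽 (Fin ℓ)) := by
  set b := FreeAlgebra.basisFreeMonoid 𝔽 (Fin ℓ)
  set C := commSub 𝔽 (FreeAlgebra 𝔽 (Fin ℓ))
  have key : C.mkQ ∘ₗ (LinearMap.id - Pmap) = 0 := by
    apply Module.Basis.ext b
    intro w
    simp only [LinearMap.comp_apply, LinearMap.sub_apply, LinearMap.id_apply,
      LinearMap.zero_apply, map_sub]
    rw [Pmap, Module.Basis.constr_basis, basis_eq_word]
    set l := FreeMonoid.toList w with hl
    by_cases h0 : l.length = 0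
    · rw [if_pos h0, List.length_eq_zero_iff.mp h0, word_nil, sub_self]
    · rw [if_neg h0, map_smul, map_sum]
      have hterm : ∀ j ∈ Finset.range l.length,
          C.mkQ (word 𝔽 (l.drop j ++ l.take j)) = C.mkQ (word 𝔽 l) := by
        intro j _
        rw [← sub_eq_zero, ← map_sub, Submodule.mkQ_apply, Submodule.Quotient.mk_eq_zero]
        exact rot_sub_mem l j
      rw [Finset.sum_congr rfl hterm, Finset.sum_const, Finset.card_range,
        ← Nat.cast_smul_eq_nsmul 𝔽, smul_smul,
        inv_mul_cancel₀ (by exact_mod_cast h0), one_smul, sub_self]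
  have := congrArg (fun φ => φ f) key
  simp only [LinearMap.comp_apply, LinearMap.sub_apply, LinearMap.id_apply,
    LinearMap.zero_apply, Submodule.mkQ_apply] at this
  rwa [Submodule.Quotient.mk_eq_zero] at this

end free
end St16

/-- on the free algebra `R_ℓ`, `m((∂f/∂x_i)^σ) = 0` for all `i`
iff `f ∈ 𝔽·1 + [R_ℓ, R_ℓ]`. -/
theorem statement_16 (𝔽 : Type) [Field 𝔽] [CharZero 𝔽] (ℓ : ℕ)
    (D : Fin ℓ → (FreeAlgebra 𝔽 (Fin ℓ) →ₗ[𝔽] FreeAlgebra 𝔽 (Fin ℓ) ⊗[𝔽] FreeAlgebra 𝔽 (Fin ℓ)))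
    (hD : ∀ i, Is2Deriv (D i))
    (hgen : ∀ i k, D i (FreeAlgebra.ι 𝔽 k) =
      if i = k then (1 : FreeAlgebra 𝔽 (Fin ℓ)) ⊗ₜ[𝔽] (1 : FreeAlgebra 𝔽 (Fin ℓ)) else 0)
    (f : FreeAlgebra 𝔽 (Fin ℓ)) :
    (∀ i, LinearMap.mul' 𝔽 (FreeAlgebra 𝔽 (Fin ℓ)) (swap2 𝔽 (FreeAlgebra 𝔽 (Fin ℓ)) (D i f)) = 0)
      ↔ f ∈ Submodule.span 𝔽 {(1 : FreeAlgebra 𝔽 (Fin ℓ))} ⊔ commSub 𝔽 (FreeAlgebra 𝔽 (Fin ℓ)) := by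
  constructor
  · intro h
    have hU : St16.Umap D 1 f = 0 := by
      simp only [St16.Umap, LinearMap.sum_apply, LinearMap.comp_apply]
      have : ∀ i : Fin ℓ, St16.Jm 𝔽 (FreeAlgebra 𝔽 (Fin ℓ)) 1 (D i f) = 0 := by
        intro i
        rw [St16.Jm_one_apply]
        exact h i
      simp [this]
    have h1 := St16.Pmap_mem_span D hD hgen f hU
    have h2 := St16.sub_Pmap_mem (𝔽 := 𝔽) (ℓ := ℓ) f
    have : f = St16.Pmap f + (f - St16.Pmap f) := by abel
    rw [this]
    exact Submodule.add_mem_sup h1 h2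
  · intro hf i
    rw [← St16.Jm_one_apply]
    have hker : Submodule.span 𝔽 {(1 : FreeAlgebra 𝔽 (Fin ℓ))} ⊔ commSub 𝔽 (FreeAlgebra 𝔽 (Fin ℓ))
        ≤ LinearMap.ker ((St16.Jm 𝔽 (FreeAlgebra 𝔽 (Fin ℓ)) 1) ∘ₗ D i) := by
      apply sup_le
      · rw [Submodule.span_le]
        rintro x rfl
        simp only [SetLike.mem_coe, LinearMap.mem_ker, LinearMap.comp_apply]
        rw [St16.D_one (hD i), map_zero]
      · rw [commSub, Submodule.span_le]
        rintro x ⟨a, b, rfl⟩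
        simp only [SetLike.mem_coe, LinearMap.mem_ker, LinearMap.comp_apply]
        exact St16.Jm_D_comm (hD i) a b
    have := hker hf
    rwa [LinearMap.mem_ker, LinearMap.comp_apply] at this
end DPA
end

section
/- Let R_ℓ be the free unital associative 𝔽-algebra on x₁,…,x_ℓ with partial derivatives ∂/∂x_i. For F = (F₁,…,F_ℓ) ∈ (R_ℓ)^ℓ: ∂F_j/∂x_i = (∂F_i/∂x_j)^σ for all i,j if and only if there exists f ∈ R_ℓ with F_i = m((∂f/∂x_i)^σ) for every i = 1,…,ℓ. -/
open TensorProduct LinearMap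

/-! ### Auxiliary development for statement 17 -/

set_option maxHeartbeats 1600000
set_option synthInstance.maxHeartbeats 400000

section Stmt17Aux

open FreeAlgebra

variable {𝔽 : Type} [Field 𝔽] {V : Type} [Ring V] [Algebra 𝔽 V]

lemma two_deriv_one {D : V →ₗ[𝔽] V ⊗[𝔽] V} (hD : Is2Deriv D) : D 1 = 0 := by
  have h := hD 1 1
  rw [mul_one] at h
  have hr : ract2 𝔽 V (1 : V) = LinearMap.id := by
    rw [ract2, show LinearMap.mulRight 𝔽 (1 : V) = LinearMap.id from by ext x; simp,
      LinearMap.lTensor_id]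
  have hl : lact2 𝔽 V (1 : V) = LinearMap.id := by
    rw [lact2, show LinearMap.mulLeft 𝔽 (1 : V) = LinearMap.id from by ext x; simp,
      LinearMap.rTensor_id]
  rw [hr, hl] at h
  simp only [LinearMap.id_apply] at h
  exact left_eq_add.mp h

/-- `φ₁ : a ⊗ (b ⊗ c) ↦ b ⊗ (c*a)`. -/
noncomputable def phi1 (𝔽 V : Type) [Field 𝔽] [Ring V] [Algebra 𝔽 V] :
    V ⊗[𝔽] (V ⊗[𝔽] V) →ₗ[𝔽] V ⊗[𝔽] V :=
  (LinearMap.lTensor V (LinearMap.mul' 𝔽 V)) ∘ₗ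
    (TensorProduct.assoc 𝔽 V V V).toLinearMap ∘ₗ
    (TensorProduct.comm 𝔽 V (V ⊗[𝔽] V)).toLinearMap

@[simp] lemma phi1_tmul (a b c : V) :
    phi1 𝔽 V (a ⊗ₜ[𝔽] (b ⊗ₜ[𝔽] c)) = b ⊗ₜ[𝔽] (c * a) := by
  simp [phi1]

/-- `φ₂ : (a ⊗ b) ⊗ c ↦ (c*a) ⊗ b`. -/
noncomputable def phi2 (𝔽 V : Type) [Field 𝔽] [Ring V] [Algebra 𝔽 V] :
    (V ⊗[𝔽] V) ⊗[𝔽] V →ₗ[𝔽] V ⊗[𝔽] V :=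
  (swap2 𝔽 V).toLinearMap ∘ₗ (phi1 𝔽 V) ∘ₗ (TensorProduct.assoc 𝔽 V V V).toLinearMap

@[simp] lemma phi2_tmul (a b c : V) :
    phi2 𝔽 V ((a ⊗ₜ[𝔽] b) ⊗ₜ[𝔽] c) = (c * a) ⊗ₜ[𝔽] b := by
  simp [phi2]

lemma phi1_tmul_right (u : V) (t : V ⊗[𝔽] V) :
    phi1 𝔽 V (u ⊗ₜ[𝔽] t) = ract2 𝔽 V u t := by
  induction t using TensorProduct.induction_on with
  | zero => simp [ract2]
  | tmul p q => simp [ract2]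
  | add x y hx hy => rw [TensorProduct.tmul_add, map_add, hx, hy, map_add]

lemma phi2_tmul_left (t : V ⊗[𝔽] V) (v : V) :
    phi2 𝔽 V (t ⊗ₜ[𝔽] v) = lact2 𝔽 V v t := by
  induction t using TensorProduct.induction_on with
  | zero => simp [lact2]
  | tmul p q => simp [lact2]
  | add x y hx hy => rw [TensorProduct.add_tmul, map_add, hx, hy, map_add]

lemma grad_expand {D : V →ₗ[𝔽] V ⊗[𝔽] V} (hD : Is2Deriv D) (X : V ⊗[𝔽] V) :
    D (LinearMap.mul' 𝔽 V (swap2 𝔽 V X)) =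
      phi1 𝔽 V (LinearMap.lTensor V D X) + phi2 𝔽 V (LinearMap.rTensor V D X) := by
  induction X using TensorProduct.induction_on with
  | zero => simp
  | tmul u v =>
      simp only [TensorProduct.comm_tmul, LinearMap.mul'_apply, LinearMap.lTensor_tmul,
        LinearMap.rTensor_tmul]
      rw [hD v u, phi1_tmul_right, phi2_tmul_left, add_comm]
  | add x y hx hy =>
      simp only [map_add, hx, hy]
      abel

lemma phi2_assoc_symm (X : V ⊗[𝔽] (V ⊗[𝔽] V)) :
    phi2 𝔽 V ((TensorProduct.assoc 𝔽 V V V).symm X) = swap2 𝔽 V (phi1 𝔽 V X) := by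
  induction X using TensorProduct.induction_on with
  | zero => simp
  | tmul a t =>
      induction t using TensorProduct.induction_on with
      | zero => simp
      | tmul b c => simp
      | add x y hx hy => simp only [TensorProduct.tmul_add, map_add, hx, hy]
  | add x y hx hy => simp only [map_add, hx, hy]

lemma swap_phi2_assoc_symm (X : V ⊗[𝔽] (V ⊗[𝔽] V)) :
    swap2 𝔽 V (phi2 𝔽 V ((TensorProduct.assoc 𝔽 V V V).symm X)) = phi1 𝔽 V X := by
  rw [phi2_assoc_symm]
  have : ∀ y : V ⊗[𝔽] V, swap2 𝔽 V (swap2 𝔽 V y) = y := by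
    intro y
    induction y using TensorProduct.induction_on with
    | zero => simp only [map_zero]
    | tmul a b => simp
    | add x y hx hy => simp only [map_add, hx, hy]
  exact this _

lemma swap_lact (a : V) (X : V ⊗[𝔽] V) :
    swap2 𝔽 V (lact2 𝔽 V a X) = star1l 𝔽 V a (swap2 𝔽 V X) := by
  induction X using TensorProduct.induction_on with
  | zero => simp
  | tmul u v => simp [lact2, star1l]
  | add x y hx hy => simp only [map_add, hx, hy]

lemma star1l_lact (a b : V) (X : V ⊗[𝔽] V) :
    star1l 𝔽 V a (lact2 𝔽 V b X) = lact2 𝔽 V b (star1l 𝔽 V a X) := by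
  induction X using TensorProduct.induction_on with
  | zero => simp
  | tmul u v => simp [lact2, star1l]
  | add x y hx hy => simp only [map_add, hx, hy]

lemma mul'_lact (a : V) (X : V ⊗[𝔽] V) :
    LinearMap.mul' 𝔽 V (lact2 𝔽 V a X) = a * LinearMap.mul' 𝔽 V X := by
  induction X using TensorProduct.induction_on with
  | zero => simp
  | tmul u v => simp [lact2, mul_assoc]
  | add x y hx hy => simp only [map_add, hx, hy, mul_add]

/-- `u ⊗ v ↦ (1 ⊗ u) ⊗ v`. -/
noncomputable def AAmap (𝔽 V : Type) [Field 𝔽] [Ring V] [Algebra 𝔽 V] :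
    V ⊗[𝔽] V →ₗ[𝔽] (V ⊗[𝔽] V) ⊗[𝔽] V :=
  LinearMap.rTensor V (TensorProduct.mk 𝔽 V V 1)

@[simp] lemma AAmap_tmul (u v : V) :
    AAmap 𝔽 V (u ⊗ₜ[𝔽] v) = ((1 : V) ⊗ₜ[𝔽] u) ⊗ₜ[𝔽] v := rfl

lemma assoc_symm_one_tmul (t : V ⊗[𝔽] V) :
    (TensorProduct.assoc 𝔽 V V V).symm ((1 : V) ⊗ₜ[𝔽] t) = AAmap 𝔽 V t := by
  induction t using TensorProduct.induction_on with
  | zero => simp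
  | tmul p q => simp
  | add x y hx hy => rw [TensorProduct.tmul_add, map_add, hx, hy, map_add]

lemma assoc_symm_mul_tmul (a u : V) (t : V ⊗[𝔽] V) :
    (TensorProduct.assoc 𝔽 V V V).symm ((a * u) ⊗ₜ[𝔽] t) =
      slot1L 𝔽 V a ((TensorProduct.assoc 𝔽 V V V).symm (u ⊗ₜ[𝔽] t)) := by
  induction t using TensorProduct.induction_on with
  | zero => simp
  | tmul p q => simp [slot1L]
  | add x y hx hy => rw [TensorProduct.tmul_add, map_add, hx, TensorProduct.tmul_add, map_add, hy,
      map_add]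

lemma slot1L_tmul_left (a : V) (t : V ⊗[𝔽] V) (v : V) :
    slot1L 𝔽 V a (t ⊗ₜ[𝔽] v) = (lact2 𝔽 V a t) ⊗ₜ[𝔽] v := by
  induction t using TensorProduct.induction_on with
  | zero => simp [slot1L, lact2]
  | tmul p q => simp [slot1L, lact2]
  | add x y hx hy => simp only [TensorProduct.add_tmul, map_add, hx, hy]

end Stmt17Aux

section Stmt17Free

open FreeAlgebra

variable {𝔽 : Type} [Field 𝔽] [CharZero 𝔽] {ℓ : ℕ}

local notation "𝕍" => FreeAlgebra 𝔽 (Fin ℓ)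
local notation "B" => basisFreeMonoid 𝔽 (Fin ℓ)

lemma B_apply (w : FreeMonoid (Fin ℓ)) :
    B w = (equivMonoidAlgebraFreeMonoid (R := 𝔽) (X := Fin ℓ)).symm (MonoidAlgebra.single w 1) := by
  simp [basisFreeMonoid, Module.Basis.map_apply]

lemma B_one : B 1 = 1 := by
  rw [B_apply, ← MonoidAlgebra.one_def, map_one]

lemma B_mul (w w' : FreeMonoid (Fin ℓ)) : B (w * w') = B w * B w' := by
  rw [B_apply, B_apply, B_apply, ← map_mul, MonoidAlgebra.single_mul_single, one_mul]

lemma B_of (k : Fin ℓ) : B (FreeMonoid.of k) = ι 𝔽 k := by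
  rw [B_apply, AlgEquiv.symm_apply_eq]
  simp [equivMonoidAlgebraFreeMonoid]

lemma B_cons (k : Fin ℓ) (w : FreeMonoid (Fin ℓ)) :
    B (FreeMonoid.of k * w) = ι 𝔽 k * B w := by
  rw [B_mul, B_of]

lemma D_mul_gen (D : Fin ℓ → (FreeAlgebra 𝔽 (Fin ℓ) →ₗ[𝔽] FreeAlgebra 𝔽 (Fin ℓ) ⊗[𝔽] FreeAlgebra 𝔽 (Fin ℓ)))
    (hD : ∀ i, Is2Deriv (D i))
    (hgen : ∀ i k, D i (FreeAlgebra.ι 𝔽 k) =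
      if i = k then (1 : FreeAlgebra 𝔽 (Fin ℓ)) ⊗ₜ[𝔽] (1 : FreeAlgebra 𝔽 (Fin ℓ)) else 0) (i k : Fin ℓ) (u : 𝕍) :
    D i (ι 𝔽 k * u) = (if i = k then (1 : 𝕍) ⊗ₜ[𝔽] u else 0) +
      lact2 𝔽 𝕍 (ι 𝔽 k) (D i u) := by
  rw [hD i (ι 𝔽 k) u, hgen i k]
  congr 1
  split_ifs with h
  · simp [ract2]
  · simp

lemma rT_lact (D : Fin ℓ → (FreeAlgebra 𝔽 (Fin ℓ) →ₗ[𝔽] FreeAlgebra 𝔽 (Fin ℓ) ⊗[𝔽] FreeAlgebra 𝔽 (Fin ℓ)))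
    (hD : ∀ i, Is2Deriv (D i))
    (hgen : ∀ i k, D i (FreeAlgebra.ι 𝔽 k) =
      if i = k then (1 : FreeAlgebra 𝔽 (Fin ℓ)) ⊗ₜ[𝔽] (1 : FreeAlgebra 𝔽 (Fin ℓ)) else 0) (i k : Fin ℓ) (X : 𝕍 ⊗[𝔽] 𝕍) :
    LinearMap.rTensor 𝕍 (D i) (lact2 𝔽 𝕍 (ι 𝔽 k) X) =
      (if i = k then AAmap 𝔽 𝕍 X else 0) +
        slot1L 𝔽 𝕍 (ι 𝔽 k) (LinearMap.rTensor 𝕍 (D i) X) := by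
  induction X using TensorProduct.induction_on with
  | zero => simp
  | tmul u v =>
      simp only [lact2, LinearMap.rTensor_tmul, LinearMap.mulLeft_apply]
      rw [D_mul_gen D hD hgen i k u]
      rw [TensorProduct.add_tmul, slot1L_tmul_left]
      split_ifs with h
      · rw [AAmap_tmul]
      · rw [TensorProduct.zero_tmul, zero_add]
  | add x y hx hy =>
      simp only [map_add, hx, hy]
      split_ifs <;> abel

lemma lT_lact (D : Fin ℓ → (FreeAlgebra 𝔽 (Fin ℓ) →ₗ[𝔽] FreeAlgebra 𝔽 (Fin ℓ) ⊗[𝔽] FreeAlgebra 𝔽 (Fin ℓ)))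
    (j : Fin ℓ) (a : 𝕍) (X : 𝕍 ⊗[𝔽] 𝕍) :
    (TensorProduct.assoc 𝔽 𝕍 𝕍 𝕍).symm
        (LinearMap.lTensor 𝕍 (D j) (lact2 𝔽 𝕍 a X)) =
      slot1L 𝔽 𝕍 a ((TensorProduct.assoc 𝔽 𝕍 𝕍 𝕍).symm (LinearMap.lTensor 𝕍 (D j) X)) := by
  induction X using TensorProduct.induction_on with
  | zero => simp
  | tmul u v =>
      simp only [lact2, LinearMap.lTensor_tmul, LinearMap.rTensor_tmul, LinearMap.mulLeft_apply]
      exact assoc_symm_mul_tmul a u (D j v)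
  | add x y hx hy => simp only [map_add, hx, hy]

lemma sc_mon (D : Fin ℓ → (FreeAlgebra 𝔽 (Fin ℓ) →ₗ[𝔽] FreeAlgebra 𝔽 (Fin ℓ) ⊗[𝔽] FreeAlgebra 𝔽 (Fin ℓ)))
    (hD : ∀ i, Is2Deriv (D i))
    (hgen : ∀ i k, D i (FreeAlgebra.ι 𝔽 k) =
      if i = k then (1 : FreeAlgebra 𝔽 (Fin ℓ)) ⊗ₜ[𝔽] (1 : FreeAlgebra 𝔽 (Fin ℓ)) else 0) (w : FreeMonoid (Fin ℓ)) (i j : Fin ℓ) :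
    LinearMap.rTensor 𝕍 (D i) (D j (B w)) =
      (TensorProduct.assoc 𝔽 𝕍 𝕍 𝕍).symm (LinearMap.lTensor 𝕍 (D j) (D i (B w))) := by
  induction w using FreeMonoid.recOn with
  | one => rw [B_one, two_deriv_one (hD j), two_deriv_one (hD i)]; simp
  | of_mul k w ih =>
      rw [B_cons, D_mul_gen D hD hgen i k, D_mul_gen D hD hgen j k]
      simp only [map_add]
      rw [rT_lact D hD hgen i k, lT_lact D j]
      have h1 : LinearMap.rTensor 𝕍 (D i)
          (if j = k then (1 : 𝕍) ⊗ₜ[𝔽] (B w) else 0) = 0 := by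
        split_ifs with h
        · rw [LinearMap.rTensor_tmul, two_deriv_one (hD i), TensorProduct.zero_tmul]
        · simp
      have h2 : (TensorProduct.assoc 𝔽 𝕍 𝕍 𝕍).symm (LinearMap.lTensor 𝕍 (D j)
          (if i = k then (1 : 𝕍) ⊗ₜ[𝔽] (B w) else 0)) =
          (if i = k then AAmap 𝔽 𝕍 (D j (B w)) else 0) := by
        split_ifs with h
        · rw [LinearMap.lTensor_tmul, assoc_symm_one_tmul]
        · simp
      rw [h1, h2, ih]
      abel

lemma sc (D : Fin ℓ → (FreeAlgebra 𝔽 (Fin ℓ) →ₗ[𝔽] FreeAlgebra 𝔽 (Fin ℓ) ⊗[𝔽] FreeAlgebra 𝔽 (Fin ℓ)))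
    (hD : ∀ i, Is2Deriv (D i))
    (hgen : ∀ i k, D i (FreeAlgebra.ι 𝔽 k) =
      if i = k then (1 : FreeAlgebra 𝔽 (Fin ℓ)) ⊗ₜ[𝔽] (1 : FreeAlgebra 𝔽 (Fin ℓ)) else 0) (f : 𝕍) (i j : Fin ℓ) :
    LinearMap.rTensor 𝕍 (D i) (D j f) =
      (TensorProduct.assoc 𝔽 𝕍 𝕍 𝕍).symm (LinearMap.lTensor 𝕍 (D j) (D i f)) := by
  have h : (LinearMap.rTensor 𝕍 (D i)) ∘ₗ (D j) =
      ((TensorProduct.assoc 𝔽 𝕍 𝕍 𝕍).symm.toLinearMap) ∘ₗ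
        (LinearMap.lTensor 𝕍 (D j)) ∘ₗ (D i) :=
    (basisFreeMonoid 𝔽 (Fin ℓ)).ext fun w => sc_mon D hD hgen w i j
  exact LinearMap.congr_fun h f

/-- Closedness of gradients: `∂ᵢ(m σ ∂ⱼ f) = σ ∂ⱼ(m σ ∂ᵢ f)`. -/
lemma closed_of_grad (D : Fin ℓ → (FreeAlgebra 𝔽 (Fin ℓ) →ₗ[𝔽] FreeAlgebra 𝔽 (Fin ℓ) ⊗[𝔽] FreeAlgebra 𝔽 (Fin ℓ)))
    (hD : ∀ i, Is2Deriv (D i))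
    (hgen : ∀ i k, D i (FreeAlgebra.ι 𝔽 k) =
      if i = k then (1 : FreeAlgebra 𝔽 (Fin ℓ)) ⊗ₜ[𝔽] (1 : FreeAlgebra 𝔽 (Fin ℓ)) else 0) (f : 𝕍) (i j : Fin ℓ) :
    D i (LinearMap.mul' 𝔽 𝕍 (swap2 𝔽 𝕍 (D j f))) =
      swap2 𝔽 𝕍 (D j (LinearMap.mul' 𝔽 𝕍 (swap2 𝔽 𝕍 (D i f)))) := by
  rw [grad_expand (hD i) (D j f), grad_expand (hD j) (D i f)]
  rw [sc D hD hgen f i j, sc D hD hgen f j i]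
  rw [phi2_assoc_symm, map_add, swap_phi2_assoc_symm]
  rw [add_comm]

/-- The scaling operator `B w ↦ (|w| + c)⁻¹ • B w`. -/
noncomputable def scal (c : ℕ) : 𝕍 →ₗ[𝔽] 𝕍 :=
  (basisFreeMonoid 𝔽 (Fin ℓ)).constr 𝔽 fun w => (((w.length + c : ℕ) : 𝔽))⁻¹ • B w

/-- The scaling operator `B w₁ ⊗ B w₂ ↦ (|w₁| + |w₂| + c)⁻¹ • B w₁ ⊗ B w₂`. -/
noncomputable def scal2 (c : ℕ) : 𝕍 ⊗[𝔽] 𝕍 →ₗ[𝔽] 𝕍 ⊗[𝔽] 𝕍 :=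
  ((basisFreeMonoid 𝔽 (Fin ℓ)).tensorProduct (basisFreeMonoid 𝔽 (Fin ℓ))).constr 𝔽
    fun p => (((p.1.length + p.2.length + c : ℕ) : 𝔽))⁻¹ • (B p.1 ⊗ₜ[𝔽] B p.2)

/-- The number (degree) operator `B w ↦ |w| • B w`. -/
noncomputable def NN : 𝕍 →ₗ[𝔽] 𝕍 :=
  (basisFreeMonoid 𝔽 (Fin ℓ)).constr 𝔽 fun w => ((w.length : ℕ) : 𝔽) • B w

lemma scal_B (c : ℕ) (w : FreeMonoid (Fin ℓ)) :
    scal (𝔽 := 𝔽) c (B w) = (((w.length + c : ℕ) : 𝔽))⁻¹ • B w :=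
  Module.Basis.constr_basis _ _ _ _

lemma NN_B (w : FreeMonoid (Fin ℓ)) :
    NN (𝔽 := 𝔽) (B w) = ((w.length : ℕ) : 𝔽) • B w :=
  Module.Basis.constr_basis _ _ _ _

lemma scal2_B (c : ℕ) (w₁ w₂ : FreeMonoid (Fin ℓ)) :
    scal2 (𝔽 := 𝔽) c (B w₁ ⊗ₜ[𝔽] B w₂) =
      (((w₁.length + w₂.length + c : ℕ) : 𝔽))⁻¹ • (B w₁ ⊗ₜ[𝔽] B w₂) := by
  have h := Module.Basis.constr_basis
    ((basisFreeMonoid 𝔽 (Fin ℓ)).tensorProduct (basisFreeMonoid 𝔽 (Fin ℓ))) 𝔽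
    (fun p : FreeMonoid (Fin ℓ) × FreeMonoid (Fin ℓ) =>
      (((p.1.length + p.2.length + c : ℕ) : 𝔽))⁻¹ • (B p.1 ⊗ₜ[𝔽] B p.2)) (w₁, w₂)
  rw [Module.Basis.tensorProduct_apply] at h
  exact h

lemma scal2_swap (c : ℕ) (X : 𝕍 ⊗[𝔽] 𝕍) :
    swap2 𝔽 𝕍 (scal2 c X) = scal2 c (swap2 𝔽 𝕍 X) := by
  have h : (swap2 𝔽 𝕍).toLinearMap ∘ₗ scal2 c =
      (scal2 c) ∘ₗ (swap2 𝔽 𝕍).toLinearMap := by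
    apply ((basisFreeMonoid 𝔽 (Fin ℓ)).tensorProduct (basisFreeMonoid 𝔽 (Fin ℓ))).ext
    rintro ⟨w₁, w₂⟩
    simp only [LinearMap.comp_apply, LinearEquiv.coe_coe, Module.Basis.tensorProduct_apply]
    rw [scal2_B, map_smul, TensorProduct.comm_tmul, scal2_B]
    rw [show w₂.length + w₁.length + c = w₁.length + w₂.length + c by omega]
  exact LinearMap.congr_fun h X

lemma scal2_lact (c : ℕ) (k : Fin ℓ) (X : 𝕍 ⊗[𝔽] 𝕍) :
    scal2 c (lact2 𝔽 𝕍 (ι 𝔽 k) X) = lact2 𝔽 𝕍 (ι 𝔽 k) (scal2 (c + 1) X) := by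
  have h : (scal2 c) ∘ₗ lact2 𝔽 𝕍 (ι 𝔽 k) =
      (lact2 𝔽 𝕍 (ι 𝔽 k)) ∘ₗ scal2 (c + 1) := by
    apply ((basisFreeMonoid 𝔽 (Fin ℓ)).tensorProduct (basisFreeMonoid 𝔽 (Fin ℓ))).ext
    rintro ⟨w₁, w₂⟩
    simp only [LinearMap.comp_apply, Module.Basis.tensorProduct_apply]
    have hl : lact2 𝔽 𝕍 (ι 𝔽 k) (B w₁ ⊗ₜ[𝔽] B w₂) =
        B (FreeMonoid.of k * w₁) ⊗ₜ[𝔽] B w₂ := by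
      simp [lact2, B_cons]
    rw [hl, scal2_B, scal2_B, map_smul, hl]
    rw [show (FreeMonoid.of k * w₁).length + w₂.length + c =
      w₁.length + w₂.length + (c + 1) by
        simp [FreeMonoid.length_mul, FreeMonoid.length_of]; omega]
  exact LinearMap.congr_fun h X

lemma scal2_D_mon (D : Fin ℓ → (FreeAlgebra 𝔽 (Fin ℓ) →ₗ[𝔽] FreeAlgebra 𝔽 (Fin ℓ) ⊗[𝔽] FreeAlgebra 𝔽 (Fin ℓ)))
    (hD : ∀ i, Is2Deriv (D i))
    (hgen : ∀ i k, D i (FreeAlgebra.ι 𝔽 k) =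
      if i = k then (1 : FreeAlgebra 𝔽 (Fin ℓ)) ⊗ₜ[𝔽] (1 : FreeAlgebra 𝔽 (Fin ℓ)) else 0) (w : FreeMonoid (Fin ℓ)) (i : Fin ℓ) :
    ∀ c : ℕ, scal2 (c + 1) (D i (B w)) = (((w.length + c : ℕ) : 𝔽))⁻¹ • D i (B w) := by
  induction w using FreeMonoid.recOn with
  | one => intro c; rw [B_one, two_deriv_one (hD i)]; simp
  | of_mul k w ih =>
      intro c
      rw [B_cons, D_mul_gen D hD hgen i k]
      rw [map_add, smul_add]
      congr 1
      · split_ifs with h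
        · have h1 : (1 : 𝕍) ⊗ₜ[𝔽] (B w) = B (1 : FreeMonoid (Fin ℓ)) ⊗ₜ[𝔽] B w := by rw [B_one]
          rw [h1, scal2_B]
          rw [show (1 : FreeMonoid (Fin ℓ)).length + w.length + (c + 1) =
            (FreeMonoid.of k * w).length + c by
              simp [FreeMonoid.length_mul, FreeMonoid.length_of, FreeMonoid.length_one]; omega]
        · simp only [map_zero, smul_zero]
      · rw [scal2_lact, ih (c + 1), map_smul]
        rw [show w.length + (c + 1) = (FreeMonoid.of k * w).length + c by
          simp [FreeMonoid.length_mul, FreeMonoid.length_of]; omega]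

lemma D_scal (D : Fin ℓ → (FreeAlgebra 𝔽 (Fin ℓ) →ₗ[𝔽] FreeAlgebra 𝔽 (Fin ℓ) ⊗[𝔽] FreeAlgebra 𝔽 (Fin ℓ)))
    (hD : ∀ i, Is2Deriv (D i))
    (hgen : ∀ i k, D i (FreeAlgebra.ι 𝔽 k) =
      if i = k then (1 : FreeAlgebra 𝔽 (Fin ℓ)) ⊗ₜ[𝔽] (1 : FreeAlgebra 𝔽 (Fin ℓ)) else 0) (f : 𝕍) (i : Fin ℓ) :
    D i (scal 1 f) = scal2 2 (D i f) := by
  have h : (D i) ∘ₗ (scal (𝔽 := 𝔽) (ℓ := ℓ) 1) = (scal2 2) ∘ₗ (D i) := by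
    apply (basisFreeMonoid 𝔽 (Fin ℓ)).ext
    intro w
    simp only [LinearMap.comp_apply]
    rw [scal_B, map_smul, show (2 : ℕ) = 1 + 1 from rfl, scal2_D_mon D hD hgen w i 1]
  exact LinearMap.congr_fun h f

lemma euler_mon (D : Fin ℓ → (FreeAlgebra 𝔽 (Fin ℓ) →ₗ[𝔽] FreeAlgebra 𝔽 (Fin ℓ) ⊗[𝔽] FreeAlgebra 𝔽 (Fin ℓ)))
    (hD : ∀ i, Is2Deriv (D i))
    (hgen : ∀ i k, D i (FreeAlgebra.ι 𝔽 k) =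
      if i = k then (1 : FreeAlgebra 𝔽 (Fin ℓ)) ⊗ₜ[𝔽] (1 : FreeAlgebra 𝔽 (Fin ℓ)) else 0) (w : FreeMonoid (Fin ℓ)) :
    ∑ i : Fin ℓ, LinearMap.mul' 𝔽 𝕍 (star1l 𝔽 𝕍 (ι 𝔽 i) (D i (B w))) = NN (B w) := by
  induction w using FreeMonoid.recOn with
  | one =>
      simp only [B_one, two_deriv_one (hD _), map_zero, Finset.sum_const_zero]
      rw [← B_one (𝔽 := 𝔽) (ℓ := ℓ), NN_B]
      simp [FreeMonoid.length_one]
  | of_mul k w ih =>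
      rw [B_cons]
      have hterm : ∀ i : Fin ℓ,
          LinearMap.mul' 𝔽 𝕍 (star1l 𝔽 𝕍 (ι 𝔽 i) (D i (ι 𝔽 k * B w))) =
            (if i = k then ι 𝔽 k * B w else 0) +
              ι 𝔽 k * LinearMap.mul' 𝔽 𝕍 (star1l 𝔽 𝕍 (ι 𝔽 i) (D i (B w))) := by
        intro i
        rw [D_mul_gen D hD hgen i k, map_add, map_add]
        congr 1
        · split_ifs with h
          · subst h; simp [star1l]
          · simp
        · rw [star1l_lact, mul'_lact]
      rw [Finset.sum_congr rfl fun i _ => hterm i, Finset.sum_add_distrib]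
      rw [Finset.sum_ite_eq' Finset.univ k fun _ => ι 𝔽 k * B w]
      simp only [Finset.mem_univ, if_true]
      rw [← Finset.mul_sum, ih, NN_B, mul_smul_comm, ← B_cons, NN_B]
      have hlen : (((FreeMonoid.of k * w).length : ℕ) : 𝔽) = ((w.length : ℕ) : 𝔽) + 1 := by
        rw [FreeMonoid.length_mul, FreeMonoid.length_of]
        push_cast
        ring
      rw [hlen, add_smul, one_smul]
      exact add_comm _ _

lemma euler (D : Fin ℓ → (FreeAlgebra 𝔽 (Fin ℓ) →ₗ[𝔽] FreeAlgebra 𝔽 (Fin ℓ) ⊗[𝔽] FreeAlgebra 𝔽 (Fin ℓ)))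
    (hD : ∀ i, Is2Deriv (D i))
    (hgen : ∀ i k, D i (FreeAlgebra.ι 𝔽 k) =
      if i = k then (1 : FreeAlgebra 𝔽 (Fin ℓ)) ⊗ₜ[𝔽] (1 : FreeAlgebra 𝔽 (Fin ℓ)) else 0) (f : 𝕍) :
    ∑ i : Fin ℓ, LinearMap.mul' 𝔽 𝕍 (star1l 𝔽 𝕍 (ι 𝔽 i) (D i f)) = NN f := by
  have h : (∑ i : Fin ℓ, (LinearMap.mul' 𝔽 𝕍) ∘ₗ (star1l 𝔽 𝕍 (ι 𝔽 i)) ∘ₗ (D i)) =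
      NN (𝔽 := 𝔽) (ℓ := ℓ) := by
    apply (basisFreeMonoid 𝔽 (Fin ℓ)).ext
    intro w
    rw [LinearMap.sum_apply]
    simpa using euler_mon D hD hgen w
  have h2 := LinearMap.congr_fun h f
  rw [LinearMap.sum_apply] at h2
  simpa using h2

lemma scal_NN (g : 𝕍) : scal 1 g + NN (scal 1 g) = g := by
  have h : (scal (𝔽 := 𝔽) (ℓ := ℓ) 1) + NN ∘ₗ scal 1 = LinearMap.id := by
    apply (basisFreeMonoid 𝔽 (Fin ℓ)).ext
    intro w
    rw [LinearMap.add_apply, LinearMap.comp_apply, LinearMap.id_apply, scal_B, map_smul, NN_B,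
      smul_smul, ← add_smul]
    have hne : ((w.length : 𝔽) + 1) ≠ 0 := by
      have := Nat.cast_ne_zero (R := 𝔽) (n := w.length + 1) |>.mpr (Nat.succ_ne_zero _)
      push_cast at this
      exact this
    rw [show (((w.length + 1 : ℕ) : 𝔽))⁻¹ + (((w.length + 1 : ℕ) : 𝔽))⁻¹ * ((w.length : ℕ) : 𝔽)
        = 1 by push_cast; field_simp; ring]
    rw [one_smul]
  exact LinearMap.congr_fun h g

lemma exact_of_closed (D : Fin ℓ → (FreeAlgebra 𝔽 (Fin ℓ) →ₗ[𝔽] FreeAlgebra 𝔽 (Fin ℓ) ⊗[𝔽] FreeAlgebra 𝔽 (Fin ℓ)))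
    (hD : ∀ i, Is2Deriv (D i))
    (hgen : ∀ i k, D i (FreeAlgebra.ι 𝔽 k) =
      if i = k then (1 : FreeAlgebra 𝔽 (Fin ℓ)) ⊗ₜ[𝔽] (1 : FreeAlgebra 𝔽 (Fin ℓ)) else 0) (F : Fin ℓ → 𝕍)
    (hF : ∀ i j, D i (F j) = swap2 𝔽 𝕍 (D j (F i))) (j : Fin ℓ) :
    LinearMap.mul' 𝔽 𝕍 (swap2 𝔽 𝕍 (D j (∑ i : Fin ℓ, ι 𝔽 i * scal 1 (F i)))) = F j := by
  have hterm : ∀ i : Fin ℓ,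
      LinearMap.mul' 𝔽 𝕍 (swap2 𝔽 𝕍 (D j (ι 𝔽 i * scal 1 (F i)))) =
        (if j = i then scal 1 (F j) else 0) +
          LinearMap.mul' 𝔽 𝕍 (star1l 𝔽 𝕍 (ι 𝔽 i) (D i (scal 1 (F j)))) := by
    intro i
    rw [D_mul_gen D hD hgen j i, map_add, map_add]
    congr 1
    · split_ifs with h
      · subst h; simp
      · simp
    · rw [swap_lact, D_scal D hD hgen (F i) j, scal2_swap, ← hF i j,
        ← D_scal D hD hgen (F j) i]
  rw [map_sum, map_sum, map_sum]
  rw [Finset.sum_congr rfl fun i _ => hterm i, Finset.sum_add_distrib]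
  rw [Finset.sum_ite_eq Finset.univ j fun _ => scal 1 (F j)]
  simp only [Finset.mem_univ, if_true]
  rw [euler D hD hgen (scal 1 (F j))]
  exact scal_NN (F j)

end Stmt17Free

section DPA

/-- on the free algebra `R_ℓ`, a 1-form `F` is closed
(`∂F_j/∂x_i = (∂F_i/∂x_j)^σ` for all `i,j`) iff it is exact
(`F_i = m((∂f/∂x_i)^σ)` for some `f`). -/
theorem statement_17 (𝔽 : Type) [Field 𝔽] [CharZero 𝔽] (ℓ : ℕ)
    (D : Fin ℓ → (FreeAlgebra 𝔽 (Fin ℓ) →ₗ[𝔽] FreeAlgebra 𝔽 (Fin ℓ) ⊗[𝔽] FreeAlgebra 𝔽 (Fin ℓ)))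
    (hD : ∀ i, Is2Deriv (D i))
    (hgen : ∀ i k, D i (FreeAlgebra.ι 𝔽 k) =
      if i = k then (1 : FreeAlgebra 𝔽 (Fin ℓ)) ⊗ₜ[𝔽] (1 : FreeAlgebra 𝔽 (Fin ℓ)) else 0)
    (F : Fin ℓ → FreeAlgebra 𝔽 (Fin ℓ)) :
    (∀ i j, D i (F j) = swap2 𝔽 (FreeAlgebra 𝔽 (Fin ℓ)) (D j (F i)))
      ↔ ∃ f : FreeAlgebra 𝔽 (Fin ℓ), ∀ i,
          F i = LinearMap.mul' 𝔽 (FreeAlgebra 𝔽 (Fin ℓ))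
            (swap2 𝔽 (FreeAlgebra 𝔽 (Fin ℓ)) (D i f)) := by
  constructor
  · intro hF
    refine ⟨∑ i : Fin ℓ, FreeAlgebra.ι 𝔽 i * scal 1 (F i), fun j => ?_⟩
    exact (exact_of_closed D hD hgen F hF j).symm
  · rintro ⟨f, hf⟩ i j
    rw [hf i, hf j]
    exact closed_of_grad D hD hgen f i j
end DPA
end

section
/- Let (V, ∂, {{−_λ−}}) be a double Poisson vertex algebra. For a,b ∈ V define {a,b} := m({{a_λ b}}|_{λ=0}) ∈ V, the image under the multiplication map m : V⊗V → V of the value of the polynomial {{a_λ b}} at λ = 0. Then for all a,b,c ∈ V: (i) {∂a, b} = 0 and {ab, c} = {ba, c}; (ii) {a, ∂b} = ∂{a,b} and {a, bc} = {a,b}c + b{a,c}; (iii) {a,b} + {b,a} ∈ [V,V] + ∂V; (iv) {a,{b,c}} − {b,{a,c}} = {{a,b}, c}. Consequently, V/([V,V] + ∂V) is a Lie algebra over 𝔽 with the bracket induced by {−,−}, and it acts on V by derivations of V commuting with ∂. -/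
open TensorProduct LinearMap

section DPA

variable (𝔽 : Type) [Field 𝔽] (V : Type) [Ring V] [Algebra 𝔽 V]

variable {𝔽 V}

variable (𝔽 V)

variable {𝔽 V}

variable (𝔽 V)

variable {𝔽 V}

variable (𝔽 V)

variable {𝔽 V}

section PVA

variable (𝔽 : Type) [Field 𝔽] (V : Type) [Ring V] [Algebra 𝔽 V]

/- We encode a polynomial `Σ_n C_n λ^n` with coefficients `C_n ∈ V ⊗ V` as the
finitely supported function `ℕ →₀ V ⊗ V`, and a two-variable polynomial in `λ, μ`
with coefficients in `V⊗V⊗V` as `(ℕ × ℕ) →₀ (V⊗V)⊗V`. -/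

/-- Multiplication by `λ`: shift all degrees up by one. -/
noncomputable def lamMul : (ℕ →₀ V ⊗[𝔽] V) →ₗ[𝔽] (ℕ →₀ V ⊗[𝔽] V) :=
  Finsupp.lmapDomain _ 𝔽 (· + 1)

/-- The action of `∂` on `V ⊗ V`: `∂(u⊗v) = (∂u)⊗v + u⊗(∂v)`. -/
noncomputable def d2 (pd : V →ₗ[𝔽] V) : V ⊗[𝔽] V →ₗ[𝔽] V ⊗[𝔽] V :=
  LinearMap.rTensor V pd + LinearMap.lTensor V pd

/-- Coefficientwise application of a linear map to a polynomial. -/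
noncomputable def cw (φ : V ⊗[𝔽] V →ₗ[𝔽] V ⊗[𝔽] V) :
    (ℕ →₀ V ⊗[𝔽] V) →ₗ[𝔽] (ℕ →₀ V ⊗[𝔽] V) :=
  Finsupp.mapRange.linearMap φ

/-- `P(λ+∂)_→ ⋆₁ b`: for `P = Σ_n C_n λ^n`, this is
`Σ_n Σ_{j≤n} C(n,j) (C_n ⋆₁ ∂ʲb) λ^{n−j}`. -/
noncomputable def lamShiftR (pd : V →ₗ[𝔽] V) (P : ℕ →₀ V ⊗[𝔽] V) (b : V) :
    ℕ →₀ V ⊗[𝔽] V :=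
  P.sum fun n A => ∑ j ∈ Finset.range (n + 1),
    (n.choose j : 𝔽) • Finsupp.single (n - j)
      (star1r 𝔽 V (((pd : Module.End 𝔽 V) ^ j) b) A)

/-- `(e^{∂∂_λ} a) ⋆₁ P`: for `P = Σ_n C_n λ^n`, this is
`Σ_n Σ_{j≤n} C(n,j) ((∂ʲa) ⋆₁ C_n) λ^{n−j}`. -/
noncomputable def lamShiftL (pd : V →ₗ[𝔽] V) (P : ℕ →₀ V ⊗[𝔽] V) (a : V) :
    ℕ →₀ V ⊗[𝔽] V :=
  P.sum fun n A => ∑ j ∈ Finset.range (n + 1),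
    (n.choose j : 𝔽) • Finsupp.single (n - j)
      (star1l 𝔽 V (((pd : Module.End 𝔽 V) ^ j) a) A)

/-- The right-hand side `−{{b_{−λ−∂} a}}^σ` of the skewsymmetry axiom: for
`P = {{b_λ a}} = Σ_n C′_n λ^n`, this is
`−Σ_n Σ_{j≤n} C(n,j) (−1)^n λ^{n−j} (∂ʲ C′_n)^σ`. -/
noncomputable def skewRHS (pd : V →ₗ[𝔽] V) (P : ℕ →₀ V ⊗[𝔽] V) : ℕ →₀ V ⊗[𝔽] V :=
  - P.sum fun n A => ∑ j ∈ Finset.range (n + 1),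
      (((-1 : 𝔽) ^ n) * (n.choose j : 𝔽)) •
        Finsupp.single (n - j)
          (swap2 𝔽 V (((d2 𝔽 V pd : Module.End 𝔽 (V ⊗[𝔽] V)) ^ j) A))

/-- Auxiliary map for `{{a_λ (u⊗v)}}_L`: `(E, v) ↦ (E ⊗ v)` placed in bidegree `(n,m)`. -/
noncomputable def kappaL (n m : ℕ) :
    (V ⊗[𝔽] V) →ₗ[𝔽] (V →ₗ[𝔽] ((ℕ × ℕ) →₀ (V ⊗[𝔽] V) ⊗[𝔽] V)) :=
  (LinearMap.llcomp 𝔽 V ((V ⊗[𝔽] V) ⊗[𝔽] V) ((ℕ × ℕ) →₀ (V ⊗[𝔽] V) ⊗[𝔽] V)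
    (Finsupp.lsingle (n, m))) ∘ₗ (TensorProduct.mk 𝔽 (V ⊗[𝔽] V) V)

/-- `{{a_λ {{b_μ c}} }}_L ∈ V^{⊗3}[λ,μ]`. -/
noncomputable def jacL (Br : V →ₗ[𝔽] V →ₗ[𝔽] (ℕ →₀ V ⊗[𝔽] V)) (a b c : V) :
    (ℕ × ℕ) →₀ (V ⊗[𝔽] V) ⊗[𝔽] V :=
  (Br b c).sum fun m P =>
    TensorProduct.lift ((Finsupp.lsum 𝔽 (fun n => kappaL 𝔽 V n m)) ∘ₗ (Br a)) P

/-- Auxiliary map for `{{b_μ (u⊗v)}}_R`: `(D, u) ↦ u ⊗ D` (re-associated) placed in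
bidegree `(n,m)`. -/
noncomputable def nuR (n m : ℕ) :
    (V ⊗[𝔽] V) →ₗ[𝔽] (V →ₗ[𝔽] ((ℕ × ℕ) →₀ (V ⊗[𝔽] V) ⊗[𝔽] V)) :=
  (LinearMap.llcomp 𝔽 V (V ⊗[𝔽] (V ⊗[𝔽] V)) ((ℕ × ℕ) →₀ (V ⊗[𝔽] V) ⊗[𝔽] V)
    ((Finsupp.lsingle (n, m)) ∘ₗ (TensorProduct.assoc 𝔽 V V V).symm.toLinearMap)) ∘ₗ
    (TensorProduct.mk 𝔽 V (V ⊗[𝔽] V)).flip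

/-- `{{b_μ {{a_λ c}} }}_R ∈ V^{⊗3}[λ,μ]`. -/
noncomputable def jacR (Br : V →ₗ[𝔽] V →ₗ[𝔽] (ℕ →₀ V ⊗[𝔽] V)) (b a c : V) :
    (ℕ × ℕ) →₀ (V ⊗[𝔽] V) ⊗[𝔽] V :=
  (Br a c).sum fun n P =>
    TensorProduct.lift (((Finsupp.lsum 𝔽 (fun m => nuR 𝔽 V n m)) ∘ₗ (Br b)).flip) P

/-- `(E, w) ↦ E ⊗₁ w`, i.e. `(u⊗v) ⊗₁ w = u⊗w⊗v`, bundled with `w` first. -/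
noncomputable def otimes1b : V →ₗ[𝔽] (V ⊗[𝔽] V) →ₗ[𝔽] (V ⊗[𝔽] V) ⊗[𝔽] V :=
  (LinearMap.llcomp 𝔽 (V ⊗[𝔽] V) ((V ⊗[𝔽] V) ⊗[𝔽] V) ((V ⊗[𝔽] V) ⊗[𝔽] V)
    (rho2 𝔽 V).toLinearMap) ∘ₗ (TensorProduct.mk 𝔽 (V ⊗[𝔽] V) V).flip

/-- Auxiliary map for `{{Q_{λ+μ} c}}_L`: for `E = E_k` (a coefficient of `{{Q_n′ _ν c}}`)
and `v = Q_n″`, produce `Σ_{j≤k} Σ_{s≤k−j} C(k,j) C(k−j,s) (E ⊗₁ ∂ʲv)` in bidegree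
`(n+s, k−j−s)` (expansion of `λ^n (λ+μ)^{k−j}`). -/
noncomputable def gammaC (pd : V →ₗ[𝔽] V) (n k : ℕ) :
    (V ⊗[𝔽] V) →ₗ[𝔽] (V →ₗ[𝔽] ((ℕ × ℕ) →₀ (V ⊗[𝔽] V) ⊗[𝔽] V)) :=
  ∑ j ∈ Finset.range (k + 1), ∑ s ∈ Finset.range (k - j + 1),
    ((k.choose j : 𝔽) * ((k - j).choose s : 𝔽)) •
      ((LinearMap.lcomp 𝔽 ((ℕ × ℕ) →₀ (V ⊗[𝔽] V) ⊗[𝔽] V) ((pd : Module.End 𝔽 V) ^ j)) ∘ₗ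
        (LinearMap.llcomp 𝔽 V ((V ⊗[𝔽] V) ⊗[𝔽] V) ((ℕ × ℕ) →₀ (V ⊗[𝔽] V) ⊗[𝔽] V)
          (Finsupp.lsingle (n + s, k - j - s))) ∘ₗ (otimes1b 𝔽 V).flip)

/-- `{{Q_{λ+μ} c}}_L ∈ V^{⊗3}[λ,μ]` for a polynomial `Q = Σ_n Q_n λ^n`. -/
noncomputable def jacC (pd : V →ₗ[𝔽] V) (Br : V →ₗ[𝔽] V →ₗ[𝔽] (ℕ →₀ V ⊗[𝔽] V))
    (c : V) (Q : ℕ →₀ V ⊗[𝔽] V) : (ℕ × ℕ) →₀ (V ⊗[𝔽] V) ⊗[𝔽] V :=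
  Q.sum fun n Qn =>
    TensorProduct.lift ((Finsupp.lsum 𝔽 (fun k => gammaC 𝔽 V pd n k)) ∘ₗ (Br.flip c)) Qn

/-- The bracket `{a,b} := m ({{a_λ b}}|_{λ=0})`, i.e. the multiplication applied to
the constant coefficient. -/
noncomputable def sbP (Br : V →ₗ[𝔽] V →ₗ[𝔽] (ℕ →₀ V ⊗[𝔽] V)) (a b : V) : V :=
  LinearMap.mul' 𝔽 V ((Br a b) 0)

end PVA


section Aux19

open Finsupp

variable {𝔽 : Type} [Field 𝔽] {V : Type} [Ring V] [Algebra 𝔽 V]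

private lemma aux_sum_if_zero {M N : Type} [AddCommMonoid M] [AddCommMonoid N]
    (f : ℕ →₀ M) (g : M → N) (h0 : g 0 = 0) :
    (f.sum fun n A => if n = 0 then g A else 0) = g (f 0) := by
  rw [Finsupp.sum]
  by_cases h : 0 ∈ f.support
  · rw [Finset.sum_eq_single_of_mem 0 h (fun b _ hb => if_neg hb)]
    simp
  · have hf0 : f 0 = 0 := Finsupp.notMem_support_iff.mp h
    rw [hf0, h0]
    exact Finset.sum_eq_zero fun n hn => if_neg fun e => h (by rwa [e] at hn)

private lemma aux_eval0 {M : Type} [AddCommGroup M] [Module 𝔽 M] (n : ℕ) (c : ℕ → 𝔽) (X : ℕ → M) :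
    (∑ j ∈ Finset.range (n + 1), c j • Finsupp.single (n - j) (X j)) 0 = c n • X n := by
  rw [Finsupp.finset_sum_apply]
  rw [Finset.sum_eq_single_of_mem n (Finset.self_mem_range_succ n)]
  · simp
  · intro j hj hjn
    have hlt : j < n := lt_of_le_of_ne (Nat.lt_succ_iff.mp (Finset.mem_range.mp hj)) hjn
    have hne : n - j ≠ 0 := Nat.sub_ne_zero_of_lt hlt
    simp [Finsupp.single_apply, hne]

private lemma lsum_eval {M W W2 : Type} [AddCommMonoid M] [AddCommGroup W] [AddCommGroup W2]
    [Module 𝔽 W] [Module 𝔽 W2] (P : ℕ →₀ M) (g : ℕ → M → (W →ₗ[𝔽] W2)) (v : W) :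
    (P.sum g) v = P.sum fun n E => g n E v :=
  map_finsuppSum (LinearMap.applyₗ v) P g

private lemma lsum_eval3 (f : ℕ → (V ⊗[𝔽] V) →ₗ[𝔽] V →ₗ[𝔽] ((ℕ × ℕ) →₀ (V ⊗[𝔽] V) ⊗[𝔽] V))
    (P : ℕ →₀ V ⊗[𝔽] V) (v : V) (z : ℕ × ℕ) :
    (Finsupp.lsum 𝔽 f P) v z = P.sum fun n E => f n E v z := by
  have h1 : (Finsupp.lsum 𝔽 f P) v = P.sum fun n E => f n E v := by
    rw [Finsupp.lsum_apply]
    exact map_finsuppSum (LinearMap.applyₗ v) P fun n E => f n E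
  rw [h1, Finsupp.sum_apply]

private lemma lsum_eval4 (f : ℕ → (V ⊗[𝔽] V) →ₗ[𝔽] V →ₗ[𝔽] (V ⊗[𝔽] V) ⊗[𝔽] V)
    (P : ℕ →₀ V ⊗[𝔽] V) (v : V) :
    (Finsupp.lsum 𝔽 f P) v = P.sum fun n E => f n E v := by
  rw [Finsupp.lsum_apply]
  exact map_finsuppSum (LinearMap.applyₗ v) P fun n E => f n E

/-! ### basic multiplication lemmas -/

private lemma aux_m2_ract2 (c : V) (X : V ⊗[𝔽] V) :
    LinearMap.mul' 𝔽 V (ract2 𝔽 V c X) = LinearMap.mul' 𝔽 V X * c := by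
  have h : (LinearMap.mul' 𝔽 V) ∘ₗ ract2 𝔽 V c
      = (LinearMap.mulRight 𝔽 c) ∘ₗ (LinearMap.mul' 𝔽 V) :=
    TensorProduct.ext' fun u v => by
      simp [ract2, LinearMap.mul'_apply, mul_assoc]
  simpa using LinearMap.congr_fun h X

private lemma aux_m2_lact2 (b : V) (X : V ⊗[𝔽] V) :
    LinearMap.mul' 𝔽 V (lact2 𝔽 V b X) = b * LinearMap.mul' 𝔽 V X := by
  have h : (LinearMap.mul' 𝔽 V) ∘ₗ lact2 𝔽 V b
      = (LinearMap.mulLeft 𝔽 b) ∘ₗ (LinearMap.mul' 𝔽 V) :=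
    TensorProduct.ext' fun u v => by
      simp [lact2, LinearMap.mul'_apply, mul_assoc]
  simpa using LinearMap.congr_fun h X

private lemma aux_m2_star (x : V) (A : V ⊗[𝔽] V) :
    LinearMap.mul' 𝔽 V (star1r 𝔽 V x A) = LinearMap.mul' 𝔽 V (star1l 𝔽 V x A) := by
  have h : (LinearMap.mul' 𝔽 V) ∘ₗ star1r 𝔽 V x = (LinearMap.mul' 𝔽 V) ∘ₗ star1l 𝔽 V x :=
    TensorProduct.ext' fun u v => by
      simp [star1r, star1l, LinearMap.mul'_apply, mul_assoc]
  exact LinearMap.congr_fun h A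

private lemma aux_m2_d2 (pd : V →ₗ[𝔽] V) (hpd : ∀ a b : V, pd (a * b) = pd a * b + a * pd b)
    (X : V ⊗[𝔽] V) :
    LinearMap.mul' 𝔽 V (d2 𝔽 V pd X) = pd (LinearMap.mul' 𝔽 V X) := by
  have h : (LinearMap.mul' 𝔽 V) ∘ₗ d2 𝔽 V pd = pd ∘ₗ (LinearMap.mul' 𝔽 V) :=
    TensorProduct.ext' fun u v => by
      simp [d2, LinearMap.mul'_apply, hpd]
  simpa using LinearMap.congr_fun h X

private lemma aux_swap_swap (X : V ⊗[𝔽] V) : swap2 𝔽 V (swap2 𝔽 V X) = X := by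
  have h : (swap2 𝔽 V).toLinearMap ∘ₗ (swap2 𝔽 V).toLinearMap = LinearMap.id :=
    TensorProduct.ext' fun u v => by simp
  simpa using LinearMap.congr_fun h X

private lemma aux_swap_d2 (pd : V →ₗ[𝔽] V) (X : V ⊗[𝔽] V) :
    swap2 𝔽 V (d2 𝔽 V pd X) = d2 𝔽 V pd (swap2 𝔽 V X) := by
  have h : (swap2 𝔽 V).toLinearMap ∘ₗ d2 𝔽 V pd = d2 𝔽 V pd ∘ₗ (swap2 𝔽 V).toLinearMap :=
    TensorProduct.ext' fun u v => by
      simp [d2, add_comm]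
  simpa using LinearMap.congr_fun h X

private lemma aux_swap_mem (X : V ⊗[𝔽] V) :
    LinearMap.mul' 𝔽 V (swap2 𝔽 V X) - LinearMap.mul' 𝔽 V X ∈ commSub 𝔽 V := by
  induction X using TensorProduct.induction_on with
  | zero => simp
  | tmul u v =>
      simp only [TensorProduct.comm_tmul, LinearMap.mul'_apply]
      exact Submodule.subset_span ⟨v, u, rfl⟩
  | add x y hx hy =>
      simp only [map_add, add_sub_add_comm]
      exact add_mem hx hy

/-! ### coefficient extraction -/

private lemma aux_lamMul0 (P : ℕ →₀ V ⊗[𝔽] V) : lamMul 𝔽 V P 0 = 0 := by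
  rw [lamMul, Finsupp.lmapDomain_apply]
  exact Finsupp.mapDomain_notin_range _ _ (by rintro ⟨n, hn⟩; simp at hn)

private lemma aux_cw_apply (φ : V ⊗[𝔽] V →ₗ[𝔽] V ⊗[𝔽] V) (P : ℕ →₀ V ⊗[𝔽] V) (n : ℕ) :
    cw 𝔽 V φ P n = φ (P n) := by
  simp [cw, Finsupp.mapRange_apply]

private lemma aux_lamShiftR0 (pd : V →ₗ[𝔽] V) (P : ℕ →₀ V ⊗[𝔽] V) (b : V) :
    lamShiftR 𝔽 V pd P b 0
      = P.sum fun n A => star1r 𝔽 V (((pd : Module.End 𝔽 V) ^ n) b) A := by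
  rw [lamShiftR, Finsupp.sum_apply]
  refine Finsupp.sum_congr fun n _ => ?_
  rw [aux_eval0]
  simp

private lemma aux_lamShiftL0 (pd : V →ₗ[𝔽] V) (P : ℕ →₀ V ⊗[𝔽] V) (a : V) :
    lamShiftL 𝔽 V pd P a 0
      = P.sum fun n A => star1l 𝔽 V (((pd : Module.End 𝔽 V) ^ n) a) A := by
  rw [lamShiftL, Finsupp.sum_apply]
  refine Finsupp.sum_congr fun n _ => ?_
  rw [aux_eval0]
  simp

private lemma aux_skewRHS0 (pd : V →ₗ[𝔽] V) (P : ℕ →₀ V ⊗[𝔽] V) :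
    skewRHS 𝔽 V pd P 0
      = - P.sum fun n A => ((-1 : 𝔽) ^ n) •
          swap2 𝔽 V (((d2 𝔽 V pd : Module.End 𝔽 (V ⊗[𝔽] V)) ^ n) A) := by
  rw [skewRHS, Finsupp.neg_apply, Finsupp.sum_apply]
  congr 1
  refine Finsupp.sum_congr fun n _ => ?_
  rw [aux_eval0]
  simp


/-! ### parts (i)-(iii) -/

variable (pd : V →ₗ[𝔽] V) (Br : V →ₗ[𝔽] V →ₗ[𝔽] (ℕ →₀ V ⊗[𝔽] V))

private lemma part_i1 (hsesq1 : ∀ a b : V, Br (pd a) b = - lamMul 𝔽 V (Br a b)) (a b : V) :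
    sbP 𝔽 V Br (pd a) b = 0 := by
  rw [sbP, hsesq1, Finsupp.neg_apply, aux_lamMul0, neg_zero, map_zero]

private lemma aux_mul_left0
    (hright : ∀ a b c : V,
      Br (a * b) c = lamShiftR 𝔽 V pd (Br a c) b + lamShiftL 𝔽 V pd (Br b c) a)
    (a b c : V) :
    sbP 𝔽 V Br (a * b) c
      = ((Br a c).sum fun n A =>
          LinearMap.mul' 𝔽 V (star1r 𝔽 V (((pd : Module.End 𝔽 V) ^ n) b) A))
      + ((Br b c).sum fun n A =>
          LinearMap.mul' 𝔽 V (star1r 𝔽 V (((pd : Module.End 𝔽 V) ^ n) a) A)) := by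
  rw [sbP, hright, Finsupp.add_apply, map_add, aux_lamShiftR0, aux_lamShiftL0,
    map_finsuppSum, map_finsuppSum]
  congr 1
  exact Finsupp.sum_congr fun n _ => (aux_m2_star _ _).symm

private lemma part_i2
    (hright : ∀ a b c : V,
      Br (a * b) c = lamShiftR 𝔽 V pd (Br a c) b + lamShiftL 𝔽 V pd (Br b c) a)
    (a b c : V) :
    sbP 𝔽 V Br (a * b) c = sbP 𝔽 V Br (b * a) c := by
  rw [aux_mul_left0 pd Br hright, aux_mul_left0 pd Br hright]
  exact add_comm _ _

private lemma part_ii1 (hpd : ∀ a b : V, pd (a * b) = pd a * b + a * pd b)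
    (hsesq2 : ∀ a b : V,
      Br a (pd b) = lamMul 𝔽 V (Br a b) + cw 𝔽 V (d2 𝔽 V pd) (Br a b))
    (a b : V) :
    sbP 𝔽 V Br a (pd b) = pd (sbP 𝔽 V Br a b) := by
  rw [sbP, hsesq2, Finsupp.add_apply, aux_lamMul0, aux_cw_apply, zero_add,
    aux_m2_d2 pd hpd, sbP]

private lemma part_ii2
    (hleft : ∀ a b c : V,
      Br a (b * c) = cw 𝔽 V (ract2 𝔽 V c) (Br a b) + cw 𝔽 V (lact2 𝔽 V b) (Br a c))
    (a b c : V) :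
    sbP 𝔽 V Br a (b * c) = sbP 𝔽 V Br a b * c + b * sbP 𝔽 V Br a c := by
  rw [sbP, sbP, sbP, hleft, Finsupp.add_apply, aux_cw_apply, aux_cw_apply, map_add,
    aux_m2_ract2, aux_m2_lact2]

private lemma part_iii (hpd : ∀ a b : V, pd (a * b) = pd a * b + a * pd b)
    (hskew : ∀ a b : V, Br a b = skewRHS 𝔽 V pd (Br b a)) (a b : V) :
    sbP 𝔽 V Br a b + sbP 𝔽 V Br b a ∈ commSub 𝔽 V ⊔ LinearMap.range pd := by
  have h1 : sbP 𝔽 V Br a b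
      = - (Br b a).sum fun n A => ((-1 : 𝔽) ^ n) •
          (LinearMap.mul' 𝔽 V (swap2 𝔽 V (((d2 𝔽 V pd : Module.End 𝔽 (V ⊗[𝔽] V)) ^ n) A))) := by
    rw [sbP, hskew, aux_skewRHS0, map_neg, map_finsuppSum]
    congr 1
    exact Finsupp.sum_congr fun n _ => by rw [map_smul]
  have h2 : sbP 𝔽 V Br b a
      = (Br b a).sum fun n A => if n = 0 then LinearMap.mul' 𝔽 V A else 0 :=
    (aux_sum_if_zero (Br b a) (fun A => LinearMap.mul' 𝔽 V A) (map_zero _)).symm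
  rw [h1, h2, neg_add_eq_sub, ← Finsupp.sum_sub]
  rw [Finsupp.sum]
  apply Submodule.sum_mem
  intro n _
  match n with
  | 0 =>
      simp only [if_pos rfl, pow_zero, one_smul, Module.End.one_apply]
      have := Submodule.mem_sup_left (T := LinearMap.range pd)
        (aux_swap_mem (𝔽 := 𝔽) ((Br b a) 0))
      simpa using neg_mem this
  | (k + 1) =>
      rw [if_neg (Nat.succ_ne_zero k), zero_sub]
      apply neg_mem
      apply Submodule.smul_mem
      apply Submodule.mem_sup_right
      rw [pow_succ', Module.End.mul_apply, aux_swap_d2, aux_m2_d2 pd hpd]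
      exact ⟨_, rfl⟩


/-! ### machinery for the Jacobi part -/

private noncomputable def br0 (a : V) : V →ₗ[𝔽] V ⊗[𝔽] V :=
  (Finsupp.lapply 0) ∘ₗ Br a

private noncomputable def sbm (a : V) : V →ₗ[𝔽] V :=
  (LinearMap.mul' 𝔽 V) ∘ₗ br0 Br a

private noncomputable def sbmR (c : V) : V →ₗ[𝔽] V :=
  (LinearMap.mul' 𝔽 V) ∘ₗ (Finsupp.lapply 0) ∘ₗ (Br.flip c)

private noncomputable def M3V : (V ⊗[𝔽] V) ⊗[𝔽] V →ₗ[𝔽] V :=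
  (LinearMap.mul' 𝔽 V) ∘ₗ (LinearMap.rTensor V (LinearMap.mul' 𝔽 V))

private noncomputable def gam0 (k : ℕ) : (V ⊗[𝔽] V) →ₗ[𝔽] V →ₗ[𝔽] (V ⊗[𝔽] V) ⊗[𝔽] V :=
  (LinearMap.lcomp 𝔽 _ ((pd : Module.End 𝔽 V) ^ k)) ∘ₗ (otimes1b 𝔽 V).flip

private noncomputable def Lm (c : V) : V ⊗[𝔽] V →ₗ[𝔽] (V ⊗[𝔽] V) ⊗[𝔽] V :=
  TensorProduct.lift ((Finsupp.lsum 𝔽 (fun k => gam0 pd k)) ∘ₗ (Br.flip c))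

private noncomputable def LcV (c : V) : V ⊗[𝔽] V →ₗ[𝔽] V := M3V ∘ₗ Lm pd Br c

private lemma gam0_apply (k : ℕ) (E : V ⊗[𝔽] V) (v : V) :
    gam0 pd k E v = rho2 𝔽 V (E ⊗ₜ (((pd : Module.End 𝔽 V) ^ k) v)) := rfl

private lemma kappaL_coeff (n m : ℕ) (E : V ⊗[𝔽] V) (v : V) :
    (kappaL 𝔽 V n m E v) (0, 0) = if n = 0 ∧ m = 0 then E ⊗ₜ[𝔽] v else 0 := by
  show (Finsupp.single (n, m) (E ⊗ₜ[𝔽] v)) (0, 0) = _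
  rw [Finsupp.single_apply]
  by_cases hn : n = 0 <;> by_cases hm : m = 0 <;> simp [hn, hm, Prod.ext_iff]

private lemma nuR_coeff (n m : ℕ) (D : V ⊗[𝔽] V) (u : V) :
    (nuR 𝔽 V n m D u) (0, 0)
      = if n = 0 ∧ m = 0 then (TensorProduct.assoc 𝔽 V V V).symm (u ⊗ₜ D) else 0 := by
  show (Finsupp.single (n, m) ((TensorProduct.assoc 𝔽 V V V).symm (u ⊗ₜ D))) (0, 0) = _
  rw [Finsupp.single_apply]
  by_cases hn : n = 0 <;> by_cases hm : m = 0 <;> simp [hn, hm, Prod.ext_iff]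

private lemma gammaC_coeff (n k : ℕ) (E : V ⊗[𝔽] V) (v : V) :
    (gammaC 𝔽 V pd n k E v) (0, 0)
      = if n = 0 then rho2 𝔽 V (E ⊗ₜ (((pd : Module.End 𝔽 V) ^ k) v)) else 0 := by
  rw [gammaC]
  simp only [LinearMap.sum_apply, Finsupp.finset_sum_apply, LinearMap.smul_apply,
    Finsupp.smul_apply, LinearMap.comp_apply, LinearMap.lcomp_apply, LinearMap.llcomp_apply,
    Finsupp.lsingle_apply, LinearMap.flip_apply]
  have hterm : ∀ w : V, otimes1b 𝔽 V w E = rho2 𝔽 V (E ⊗ₜ w) := fun _ => rfl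
  simp only [hterm, Finsupp.single_apply]
  rw [Finset.sum_eq_single_of_mem k (Finset.self_mem_range_succ k)]
  · simp only [Nat.sub_self, Finset.sum_range_one, Nat.choose_self, Nat.choose_zero_right,
      Nat.cast_one, mul_one, one_smul, Nat.sub_zero, add_zero]
    by_cases hn : n = 0 <;> simp [hn, Prod.ext_iff]
  · intro j hj hjk
    have hj' : j < k := by have := Finset.mem_range.mp hj; omega
    apply Finset.sum_eq_zero
    intro s hs
    have hs' : s ≤ k - j := by have := Finset.mem_range.mp hs; omega
    have hP : ¬(((n + s : ℕ), (k - j - s : ℕ)) = ((0 : ℕ), (0 : ℕ))) := by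
      intro h
      rw [Prod.mk.injEq] at h
      omega
    rw [if_neg hP, smul_zero]

private lemma aux_jacL00 (a b c : V) :
    jacL 𝔽 V Br a b c (0, 0) = LinearMap.rTensor V (br0 Br a) ((Br b c) 0) := by
  rw [jacL, Finsupp.sum_apply]
  have key : ∀ (m : ℕ) (P : V ⊗[𝔽] V),
      (TensorProduct.lift ((Finsupp.lsum 𝔽 (fun n => kappaL 𝔽 V n m)) ∘ₗ (Br a)) P) (0, 0)
        = if m = 0 then LinearMap.rTensor V (br0 Br a) P else 0 := by
    intro m P
    have hmap : (Finsupp.lapply ((0 : ℕ), (0 : ℕ))) ∘ₗ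
        TensorProduct.lift ((Finsupp.lsum 𝔽 (fun n => kappaL 𝔽 V n m)) ∘ₗ (Br a))
        = if m = 0 then LinearMap.rTensor V (br0 Br a) else 0 := by
      apply TensorProduct.ext'
      intro u v
      simp only [LinearMap.comp_apply, TensorProduct.lift.tmul, Finsupp.lapply_apply]
      rw [lsum_eval3]
      simp only [kappaL_coeff]
      by_cases hm : m = 0
      · subst hm
        simp only [and_true, if_pos rfl]
        rw [aux_sum_if_zero _ (fun E => E ⊗ₜ[𝔽] v) (by simp)]
        simp [br0]
      · simp [hm]
    have := LinearMap.congr_fun hmap P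
    by_cases hm : m = 0
    · subst hm; simpa using this
    · simp only [if_neg hm] at this ⊢; simpa using this
  refine Eq.trans (Finsupp.sum_congr
    (g2 := fun m P => if m = 0 then LinearMap.rTensor V (br0 Br a) P else 0)
    fun m _ => key m _) ?_
  exact aux_sum_if_zero _ (fun P => LinearMap.rTensor V (br0 Br a) P) (by simp)

private lemma aux_jacR00 (b a c : V) :
    jacR 𝔽 V Br b a c (0, 0)
      = (TensorProduct.assoc 𝔽 V V V).symm (LinearMap.lTensor V (br0 Br b) ((Br a c) 0)) := by
  rw [jacR, Finsupp.sum_apply]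
  have key : ∀ (n : ℕ) (P : V ⊗[𝔽] V),
      (TensorProduct.lift (((Finsupp.lsum 𝔽 (fun m => nuR 𝔽 V n m)) ∘ₗ (Br b)).flip) P) (0, 0)
        = if n = 0 then
            (TensorProduct.assoc 𝔽 V V V).symm (LinearMap.lTensor V (br0 Br b) P) else 0 := by
    intro n P
    have hmap : (Finsupp.lapply ((0 : ℕ), (0 : ℕ))) ∘ₗ
        TensorProduct.lift (((Finsupp.lsum 𝔽 (fun m => nuR 𝔽 V n m)) ∘ₗ (Br b)).flip)
        = if n = 0 then
            (TensorProduct.assoc 𝔽 V V V).symm.toLinearMap ∘ₗ LinearMap.lTensor V (br0 Br b)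
          else 0 := by
      apply TensorProduct.ext'
      intro u v
      simp only [LinearMap.comp_apply, TensorProduct.lift.tmul, Finsupp.lapply_apply,
        LinearMap.flip_apply]
      rw [lsum_eval3]
      simp only [nuR_coeff]
      by_cases hn : n = 0
      · subst hn
        simp only [true_and, if_pos rfl]
        rw [aux_sum_if_zero _ (fun D => (TensorProduct.assoc 𝔽 V V V).symm (u ⊗ₜ D))
          (by show (TensorProduct.assoc 𝔽 V V V).symm (u ⊗ₜ[𝔽] (0 : V ⊗[𝔽] V)) = 0
              rw [TensorProduct.tmul_zero]
              exact (TensorProduct.assoc 𝔽 V V V).symm.map_zero)]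
        simp [br0]
      · simp [hn]
    have := LinearMap.congr_fun hmap P
    by_cases hn : n = 0
    · subst hn
      simpa using this
    · simp only [if_neg hn] at this ⊢
      simpa using this
  refine Eq.trans (Finsupp.sum_congr
    (g2 := fun n P => if n = 0 then
      (TensorProduct.assoc 𝔽 V V V).symm (LinearMap.lTensor V (br0 Br b) P) else 0)
    fun n _ => key n _) ?_
  exact aux_sum_if_zero _
    (fun P => (TensorProduct.assoc 𝔽 V V V).symm (LinearMap.lTensor V (br0 Br b) P))
    (by simp)

private lemma aux_jacC00 (c : V) (Q : ℕ →₀ V ⊗[𝔽] V) :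
    jacC 𝔽 V pd Br c Q (0, 0) = Lm pd Br c (Q 0) := by
  rw [jacC, Finsupp.sum_apply]
  have key : ∀ (n : ℕ) (X : V ⊗[𝔽] V),
      (TensorProduct.lift ((Finsupp.lsum 𝔽 (fun k => gammaC 𝔽 V pd n k)) ∘ₗ (Br.flip c)) X)
          (0, 0)
        = if n = 0 then Lm pd Br c X else 0 := by
    intro n X
    have hmap : (Finsupp.lapply ((0 : ℕ), (0 : ℕ))) ∘ₗ
        TensorProduct.lift ((Finsupp.lsum 𝔽 (fun k => gammaC 𝔽 V pd n k)) ∘ₗ (Br.flip c))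
        = if n = 0 then Lm pd Br c else 0 := by
      apply TensorProduct.ext'
      intro u v
      simp only [LinearMap.comp_apply, TensorProduct.lift.tmul, Finsupp.lapply_apply,
        LinearMap.flip_apply]
      rw [lsum_eval3]
      simp only [gammaC_coeff]
      by_cases hn : n = 0
      · subst hn
        simp only [eq_self_iff_true, if_true]
        rw [Lm, TensorProduct.lift.tmul]
        simp only [LinearMap.comp_apply, LinearMap.flip_apply]
        rw [lsum_eval4]
        exact Finsupp.sum_congr fun k _ => (gam0_apply pd k _ v).symm
      · simp [hn]
    have := LinearMap.congr_fun hmap X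
    by_cases hn : n = 0
    · subst hn; simpa using this
    · simp only [if_neg hn] at this ⊢; simpa using this
  refine Eq.trans (Finsupp.sum_congr
    (g2 := fun n X => if n = 0 then Lm pd Br c X else 0)
    fun n _ => key n _) ?_
  exact aux_sum_if_zero _ (fun X => Lm pd Br c X) (by simp)

private lemma aux_E1 (a : V) (X : V ⊗[𝔽] V) :
    M3V (LinearMap.rTensor V (br0 Br a) X)
      = LinearMap.mul' 𝔽 V (LinearMap.rTensor V (sbm Br a) X) := by
  have h : M3V ∘ₗ LinearMap.rTensor V (br0 Br a)
      = (LinearMap.mul' 𝔽 V) ∘ₗ LinearMap.rTensor V (sbm Br a) :=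
    TensorProduct.ext' fun u v => by
      simp [M3V, sbm, LinearMap.mul'_apply]
  exact LinearMap.congr_fun h X

private lemma aux_F2 (u : V) (Y : V ⊗[𝔽] V) :
    M3V ((TensorProduct.assoc 𝔽 V V V).symm (u ⊗ₜ Y)) = u * LinearMap.mul' 𝔽 V Y := by
  have h : (M3V ∘ₗ (TensorProduct.assoc 𝔽 V V V).symm.toLinearMap) ∘ₗ
      (TensorProduct.mk 𝔽 V (V ⊗[𝔽] V) u)
      = (LinearMap.mulLeft 𝔽 u) ∘ₗ (LinearMap.mul' 𝔽 V) :=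
    TensorProduct.ext' fun p q => by
      simp [M3V, TensorProduct.assoc_symm_tmul, LinearMap.mul'_apply, mul_assoc]
  exact LinearMap.congr_fun h Y

private lemma aux_E2 (b : V) (X : V ⊗[𝔽] V) :
    M3V ((TensorProduct.assoc 𝔽 V V V).symm (LinearMap.lTensor V (br0 Br b) X))
      = LinearMap.mul' 𝔽 V (LinearMap.lTensor V (sbm Br b) X) := by
  have h : ((M3V ∘ₗ (TensorProduct.assoc 𝔽 V V V).symm.toLinearMap) ∘ₗ
      LinearMap.lTensor V (br0 Br b))
      = (LinearMap.mul' 𝔽 V) ∘ₗ LinearMap.lTensor V (sbm Br b) :=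
    TensorProduct.ext' fun u v => by
      simp only [LinearMap.comp_apply, LinearMap.lTensor_tmul, LinearEquiv.coe_coe]
      rw [aux_F2, LinearMap.mul'_apply]
      rfl
  exact LinearMap.congr_fun h X

private lemma aux_F1 (w : V) (E : V ⊗[𝔽] V) :
    M3V (rho2 𝔽 V (E ⊗ₜ w)) = LinearMap.mul' 𝔽 V (star1r 𝔽 V w E) := by
  have h : ((M3V ∘ₗ (rho2 𝔽 V).toLinearMap) ∘ₗ (TensorProduct.mk 𝔽 (V ⊗[𝔽] V) V).flip w)
      = (LinearMap.mul' 𝔽 V) ∘ₗ star1r 𝔽 V w :=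
    TensorProduct.ext' fun p q => by
      simp [M3V, rho2, star1r, LinearMap.mul'_apply, mul_assoc]
  exact LinearMap.congr_fun h E

private lemma aux_Lc_apply (c u v : V) :
    LcV pd Br c (u ⊗ₜ v)
      = (Br u c).sum fun k E =>
          LinearMap.mul' 𝔽 V (star1r 𝔽 V (((pd : Module.End 𝔽 V) ^ k) v) E) := by
  rw [LcV, LinearMap.comp_apply, Lm, TensorProduct.lift.tmul]
  simp only [LinearMap.comp_apply, LinearMap.flip_apply]
  rw [lsum_eval4, map_finsuppSum]
  refine Finsupp.sum_congr fun k _ => ?_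
  rw [gam0_apply, aux_F1]

private lemma aux_G
    (hleft : ∀ a b c : V,
      Br a (b * c) = cw 𝔽 V (ract2 𝔽 V c) (Br a b) + cw 𝔽 V (lact2 𝔽 V b) (Br a c))
    (a : V) (X : V ⊗[𝔽] V) :
    sbm Br a (LinearMap.mul' 𝔽 V X)
      = LinearMap.mul' 𝔽 V (LinearMap.rTensor V (sbm Br a) X)
        + LinearMap.mul' 𝔽 V (LinearMap.lTensor V (sbm Br a) X) := by
  have h : sbm Br a ∘ₗ LinearMap.mul' 𝔽 V
      = (LinearMap.mul' 𝔽 V) ∘ₗ LinearMap.rTensor V (sbm Br a)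
        + (LinearMap.mul' 𝔽 V) ∘ₗ LinearMap.lTensor V (sbm Br a) :=
    TensorProduct.ext' fun u v => by
      simp only [LinearMap.comp_apply, LinearMap.add_apply, LinearMap.rTensor_tmul,
        LinearMap.lTensor_tmul, LinearMap.mul'_apply]
      exact part_ii2 Br hleft a u v
  have := LinearMap.congr_fun h X
  simpa using this

private lemma aux_H
    (hright : ∀ a b c : V,
      Br (a * b) c = lamShiftR 𝔽 V pd (Br a c) b + lamShiftL 𝔽 V pd (Br b c) a)
    (c : V) (X : V ⊗[𝔽] V) :
    sbP 𝔽 V Br (LinearMap.mul' 𝔽 V X) c = LcV pd Br c X + LcV pd Br c (swap2 𝔽 V X) := by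
  have h : sbmR Br c ∘ₗ LinearMap.mul' 𝔽 V
      = LcV pd Br c + LcV pd Br c ∘ₗ (swap2 𝔽 V).toLinearMap :=
    TensorProduct.ext' fun u v => by
      simp only [LinearMap.comp_apply, LinearMap.add_apply, LinearEquiv.coe_coe,
        TensorProduct.comm_tmul]
      rw [aux_Lc_apply, aux_Lc_apply]
      rw [show sbmR Br c (LinearMap.mul' 𝔽 V (u ⊗ₜ[𝔽] v)) = sbP 𝔽 V Br (u * v) c by
        rw [LinearMap.mul'_apply]; rfl]
      exact aux_mul_left0 pd Br hright u v c
  have := LinearMap.congr_fun h X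
  exact this


private lemma aux_I (hsesq1 : ∀ a b : V, Br (pd a) b = - lamMul 𝔽 V (Br a b))
    (c : V) (X : V ⊗[𝔽] V) :
    LcV pd Br c (d2 𝔽 V pd X) = 0 := by
  have h : LcV pd Br c ∘ₗ d2 𝔽 V pd = 0 :=
    TensorProduct.ext' fun u v => by
      simp only [LinearMap.comp_apply, LinearMap.zero_apply, d2, LinearMap.add_apply,
        LinearMap.rTensor_tmul, LinearMap.lTensor_tmul, map_add]
      rw [aux_Lc_apply, aux_Lc_apply]
      have h1 : ((Br (pd u) c).sum fun k E =>
          LinearMap.mul' 𝔽 V (star1r 𝔽 V (((pd : Module.End 𝔽 V) ^ k) v) E))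
          = - (Br u c).sum fun k E =>
              LinearMap.mul' 𝔽 V (star1r 𝔽 V (((pd : Module.End 𝔽 V) ^ (k + 1)) v) E) := by
        rw [hsesq1]
        rw [Finsupp.sum_neg_index (fun k => by simp)]
        rw [lamMul, Finsupp.lmapDomain_apply]
        rw [Finsupp.sum_mapDomain_index (fun k => by simp)
          (fun k m1 m2 => by simp [neg_add, add_comm])]
        refine Eq.trans (Finsupp.sum_congr
          (g2 := fun k E => - LinearMap.mul' 𝔽 V
            (star1r 𝔽 V (((pd : Module.End 𝔽 V) ^ (k + 1)) v) E))
          fun k _ => by rw [map_neg, map_neg]) ?_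
        rw [Finsupp.sum, Finsupp.sum]
        exact Finset.sum_neg_distrib _
      have h2 : ((Br u c).sum fun k E =>
          LinearMap.mul' 𝔽 V (star1r 𝔽 V (((pd : Module.End 𝔽 V) ^ k) (pd v)) E))
          = (Br u c).sum fun k E =>
              LinearMap.mul' 𝔽 V (star1r 𝔽 V (((pd : Module.End 𝔽 V) ^ (k + 1)) v) E) :=
        Finsupp.sum_congr fun k _ => by rw [pow_succ, Module.End.mul_apply]
      rw [h1, h2, neg_add_cancel]
  exact LinearMap.congr_fun h X

private lemma part_iv
    (hpd : ∀ a b : V, pd (a * b) = pd a * b + a * pd b)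
    (hsesq1 : ∀ a b : V, Br (pd a) b = - lamMul 𝔽 V (Br a b))
    (hleft : ∀ a b c : V,
      Br a (b * c) = cw 𝔽 V (ract2 𝔽 V c) (Br a b) + cw 𝔽 V (lact2 𝔽 V b) (Br a c))
    (hright : ∀ a b c : V,
      Br (a * b) c = lamShiftR 𝔽 V pd (Br a c) b + lamShiftL 𝔽 V pd (Br b c) a)
    (hskew : ∀ a b : V, Br a b = skewRHS 𝔽 V pd (Br b a))
    (hjac : ∀ a b c : V,
      jacL 𝔽 V Br a b c - jacR 𝔽 V Br b a c = jacC 𝔽 V pd Br c (Br a b))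
    (a b c : V) :
    sbP 𝔽 V Br a (sbP 𝔽 V Br b c) - sbP 𝔽 V Br b (sbP 𝔽 V Br a c)
      = sbP 𝔽 V Br (sbP 𝔽 V Br a b) c := by
  have jac : ∀ x y : V,
      LinearMap.mul' 𝔽 V (LinearMap.rTensor V (sbm Br x) ((Br y c) 0))
        - LinearMap.mul' 𝔽 V (LinearMap.lTensor V (sbm Br y) ((Br x c) 0))
        = LcV pd Br c ((Br x y) 0) := by
    intro x y
    have h := DFunLike.congr_fun (hjac x y c) ((0 : ℕ), (0 : ℕ))
    rw [Finsupp.sub_apply] at h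
    have h2 := congrArg (fun t => M3V t) h
    simp only [map_sub] at h2
    rw [aux_jacL00, aux_jacR00, aux_jacC00, aux_E1, aux_E2] at h2
    exact h2
  have e1 : sbP 𝔽 V Br a (sbP 𝔽 V Br b c)
      = LinearMap.mul' 𝔽 V (LinearMap.rTensor V (sbm Br a) ((Br b c) 0))
        + LinearMap.mul' 𝔽 V (LinearMap.lTensor V (sbm Br a) ((Br b c) 0)) :=
    aux_G Br hleft a ((Br b c) 0)
  have e2 : sbP 𝔽 V Br b (sbP 𝔽 V Br a c)
      = LinearMap.mul' 𝔽 V (LinearMap.rTensor V (sbm Br b) ((Br a c) 0))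
        + LinearMap.mul' 𝔽 V (LinearMap.lTensor V (sbm Br b) ((Br a c) 0)) :=
    aux_G Br hleft b ((Br a c) 0)
  have eR : sbP 𝔽 V Br (sbP 𝔽 V Br a b) c
      = LcV pd Br c ((Br a b) 0) + LcV pd Br c (swap2 𝔽 V ((Br a b) 0)) :=
    aux_H pd Br hright c ((Br a b) 0)
  have hswap : swap2 𝔽 V ((Br a b) 0)
      = - (Br b a).sum fun n A => ((-1 : 𝔽) ^ n) •
          (((d2 𝔽 V pd : Module.End 𝔽 (V ⊗[𝔽] V)) ^ n) A) := by
    rw [hskew a b, aux_skewRHS0, map_neg, map_finsuppSum]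
    congr 1
    exact Finsupp.sum_congr fun n _ => by rw [map_smul, aux_swap_swap]
  have hLswap : LcV pd Br c (swap2 𝔽 V ((Br a b) 0)) = - LcV pd Br c ((Br b a) 0) := by
    rw [hswap, map_neg, map_finsuppSum]
    congr 1
    have step : ∀ (n : ℕ) (A : V ⊗[𝔽] V),
        LcV pd Br c (((-1 : 𝔽) ^ n) • (((d2 𝔽 V pd : Module.End 𝔽 (V ⊗[𝔽] V)) ^ n) A))
          = if n = 0 then LcV pd Br c A else 0 := by
      intro n A
      match n with
      | 0 => simp
      | (k + 1) =>
          rw [if_neg (Nat.succ_ne_zero k), map_smul,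
            pow_succ' (d2 𝔽 V pd : Module.End 𝔽 (V ⊗[𝔽] V)) k, Module.End.mul_apply,
            aux_I pd Br hsesq1, smul_zero]
    refine Eq.trans (Finsupp.sum_congr
      (g2 := fun n A => if n = 0 then LcV pd Br c A else 0) fun n _ => step n _) ?_
    exact aux_sum_if_zero _ (fun A => LcV pd Br c A) (by simp)
  rw [e1, e2, eR, hLswap, ← jac a b, ← jac b a]
  abel

end Aux19




/-- properties of the bracket `{a,b} = m({{a_λ b}}|_{λ=0})` of a double
Poisson vertex algebra `(V, ∂, {{−_λ−}})`, and the induced Lie algebra structure on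
`V/([V,V] + ∂V)` together with its representation on `V` by derivations commuting
with `∂`. -/
theorem statement_19 (𝔽 : Type) [Field 𝔽] [CharZero 𝔽] (V : Type) [Ring V] [Algebra 𝔽 V]
    (pd : V →ₗ[𝔽] V) (hpd : ∀ a b : V, pd (a * b) = pd a * b + a * pd b)
    (Br : V →ₗ[𝔽] V →ₗ[𝔽] (ℕ →₀ V ⊗[𝔽] V))
    -- sesquilinearity
    (hsesq1 : ∀ a b : V, Br (pd a) b = - lamMul 𝔽 V (Br a b))
    (hsesq2 : ∀ a b : V, Br a (pd b) = lamMul 𝔽 V (Br a b) + cw 𝔽 V (d2 𝔽 V pd) (Br a b))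
    -- left and right Leibniz rules
    (hleft : ∀ a b c : V,
      Br a (b * c) = cw 𝔽 V (ract2 𝔽 V c) (Br a b) + cw 𝔽 V (lact2 𝔽 V b) (Br a c))
    (hright : ∀ a b c : V,
      Br (a * b) c = lamShiftR 𝔽 V pd (Br a c) b + lamShiftL 𝔽 V pd (Br b c) a)
    -- skewsymmetry
    (hskew : ∀ a b : V, Br a b = skewRHS 𝔽 V pd (Br b a))
    -- Jacobi identity
    (hjac : ∀ a b c : V,
      jacL 𝔽 V Br a b c - jacR 𝔽 V Br b a c = jacC 𝔽 V pd Br c (Br a b)) :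
    -- (i)
    (∀ a b : V, sbP 𝔽 V Br (pd a) b = 0) ∧
    (∀ a b c : V, sbP 𝔽 V Br (a * b) c = sbP 𝔽 V Br (b * a) c) ∧
    -- (ii)
    (∀ a b : V, sbP 𝔽 V Br a (pd b) = pd (sbP 𝔽 V Br a b)) ∧
    (∀ a b c : V, sbP 𝔽 V Br a (b * c) = sbP 𝔽 V Br a b * c + b * sbP 𝔽 V Br a c) ∧
    -- (iii)
    (∀ a b : V, sbP 𝔽 V Br a b + sbP 𝔽 V Br b a ∈ commSub 𝔽 V ⊔ LinearMap.range pd) ∧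
    -- (iv)
    (∀ a b c : V, sbP 𝔽 V Br a (sbP 𝔽 V Br b c) - sbP 𝔽 V Br b (sbP 𝔽 V Br a c) =
      sbP 𝔽 V Br (sbP 𝔽 V Br a b) c) ∧
    -- consequently: the Lie algebra structure on `V/([V,V] + ∂V)` and its action
    (∃ β : (V ⧸ (commSub 𝔽 V ⊔ LinearMap.range pd)) →ₗ[𝔽]
        (V ⧸ (commSub 𝔽 V ⊔ LinearMap.range pd)) →ₗ[𝔽]
        (V ⧸ (commSub 𝔽 V ⊔ LinearMap.range pd)),
      (∀ a b : V, β (Submodule.Quotient.mk a) (Submodule.Quotient.mk b) =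
        Submodule.Quotient.mk (sbP 𝔽 V Br a b)) ∧
      (∀ x y, β x y = - β y x) ∧
      (∀ x y z, β x (β y z) - β y (β x z) = β (β x y) z) ∧
      (∃ ρ : (V ⧸ (commSub 𝔽 V ⊔ LinearMap.range pd)) →ₗ[𝔽] V →ₗ[𝔽] V,
        (∀ a b : V, ρ (Submodule.Quotient.mk a) b = sbP 𝔽 V Br a b) ∧
        (∀ x, ∀ u w : V, ρ x (u * w) = ρ x u * w + u * ρ x w) ∧
        (∀ x, ρ x ∘ₗ pd = pd ∘ₗ ρ x) ∧
        (∀ x y, ρ x ∘ₗ ρ y - ρ y ∘ₗ ρ x = ρ (β x y)))) := by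
  have hi1 : ∀ a b : V, sbP 𝔽 V Br (pd a) b = 0 := part_i1 pd Br hsesq1
  have hi2 : ∀ a b c : V, sbP 𝔽 V Br (a * b) c = sbP 𝔽 V Br (b * a) c :=
    part_i2 pd Br hright
  have hii1 : ∀ a b : V, sbP 𝔽 V Br a (pd b) = pd (sbP 𝔽 V Br a b) :=
    part_ii1 pd Br hpd hsesq2
  have hii2 : ∀ a b c : V,
      sbP 𝔽 V Br a (b * c) = sbP 𝔽 V Br a b * c + b * sbP 𝔽 V Br a c :=
    part_ii2 Br hleft
  have hiii : ∀ a b : V,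
      sbP 𝔽 V Br a b + sbP 𝔽 V Br b a ∈ commSub 𝔽 V ⊔ LinearMap.range pd :=
    part_iii pd Br hpd hskew
  have hiv : ∀ a b c : V,
      sbP 𝔽 V Br a (sbP 𝔽 V Br b c) - sbP 𝔽 V Br b (sbP 𝔽 V Br a c)
        = sbP 𝔽 V Br (sbP 𝔽 V Br a b) c :=
    part_iv pd Br hpd hsesq1 hleft hright hskew hjac
  refine ⟨hi1, hi2, hii1, hii2, hiii, hiv, ?_⟩
  set S : Submodule 𝔽 V := commSub 𝔽 V ⊔ LinearMap.range pd with hSdef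
  set B2 : V →ₗ[𝔽] V →ₗ[𝔽] V :=
    Br.compr₂ ((LinearMap.mul' 𝔽 V) ∘ₗ (Finsupp.lapply 0)) with hB2def
  have hB2 : ∀ a b : V, B2 a b = sbP 𝔽 V Br a b := fun a b => rfl
  have hker : S ≤ LinearMap.ker B2 := by
    apply sup_le
    · rw [commSub, Submodule.span_le]
      rintro x ⟨u, w, rfl⟩
      rw [SetLike.mem_coe, LinearMap.mem_ker]
      ext d
      simp only [map_sub, LinearMap.sub_apply, LinearMap.zero_apply]
      rw [hB2, hB2, hi2 u w d, sub_self]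
    · rintro x ⟨u, rfl⟩
      rw [LinearMap.mem_ker]
      ext d
      rw [LinearMap.zero_apply, hB2]
      exact hi1 u d
  have hstab : ∀ x : V, S ≤ S.comap (B2 x) := by
    intro x
    apply sup_le
    · rw [commSub, Submodule.span_le]
      rintro y ⟨u, w, rfl⟩
      rw [SetLike.mem_coe, Submodule.mem_comap, map_sub, hB2, hB2, hii2 x u w, hii2 x w u]
      have m1 : sbP 𝔽 V Br x u * w - w * sbP 𝔽 V Br x u ∈ commSub 𝔽 V :=
        Submodule.subset_span ⟨_, _, rfl⟩
      have m2 : u * sbP 𝔽 V Br x w - sbP 𝔽 V Br x w * u ∈ commSub 𝔽 V :=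
        Submodule.subset_span ⟨_, _, rfl⟩
      have hmem : (sbP 𝔽 V Br x u * w - w * sbP 𝔽 V Br x u)
          + (u * sbP 𝔽 V Br x w - sbP 𝔽 V Br x w * u) ∈ S :=
        Submodule.mem_sup_left (add_mem m1 m2)
      convert hmem using 1
      abel
    · rintro y ⟨u, rfl⟩
      rw [Submodule.mem_comap, hB2, hii1 x u]
      exact Submodule.mem_sup_right ⟨_, rfl⟩
  let ρ : (V ⧸ S) →ₗ[𝔽] V →ₗ[𝔽] V := S.liftQ B2 hker
  have hρ : ∀ a b : V, ρ (Submodule.Quotient.mk a) b = sbP 𝔽 V Br a b := by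
    intro a b
    show (S.liftQ B2 hker) (Submodule.Quotient.mk a) b = _
    rw [Submodule.liftQ_apply]
    exact hB2 a b
  let B4 : V →ₗ[𝔽] (V ⧸ S) →ₗ[𝔽] (V ⧸ S) :=
    { toFun := fun x => S.mapQ S (B2 x) (hstab x)
      map_add' := fun x y => by
        ext z
        simp only [LinearMap.comp_apply, Submodule.mkQ_apply, Submodule.mapQ_apply,
          map_add, LinearMap.add_apply, Submodule.Quotient.mk_add]
      map_smul' := fun t x => by
        ext z
        simp only [LinearMap.comp_apply, Submodule.mkQ_apply, Submodule.mapQ_apply,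
          map_smul, LinearMap.smul_apply, Submodule.Quotient.mk_smul, RingHom.id_apply] }
  have hkerB4 : S ≤ LinearMap.ker B4 := by
    intro x hx
    rw [LinearMap.mem_ker]
    ext z
    have hB2x : B2 x = 0 := LinearMap.mem_ker.mp (hker hx)
    show S.mapQ S (B2 x) (hstab x) (Submodule.Quotient.mk z) = 0
    rw [Submodule.mapQ_apply, hB2x, LinearMap.zero_apply]
    exact (Submodule.Quotient.mk_eq_zero S).mpr (zero_mem S)
  let β := S.liftQ B4 hkerB4
  have hβ : ∀ a b : V, β (Submodule.Quotient.mk a) (Submodule.Quotient.mk b)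
      = Submodule.Quotient.mk (sbP 𝔽 V Br a b) := by
    intro a b
    show (S.liftQ B4 hkerB4) (Submodule.Quotient.mk a) (Submodule.Quotient.mk b) = _
    rw [Submodule.liftQ_apply]
    show S.mapQ S (B2 a) (hstab a) (Submodule.Quotient.mk b) = _
    rw [Submodule.mapQ_apply]
    rfl
  refine ⟨β, hβ, ?_, ?_, ⟨ρ, hρ, ?_, ?_, ?_⟩⟩
  · intro x y
    obtain ⟨a, rfl⟩ := Submodule.Quotient.mk_surjective S x
    obtain ⟨b, rfl⟩ := Submodule.Quotient.mk_surjective S y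
    rw [hβ, hβ]
    have hz : Submodule.Quotient.mk (p := S) (sbP 𝔽 V Br a b)
        + Submodule.Quotient.mk (p := S) (sbP 𝔽 V Br b a) = 0 := by
      rw [← Submodule.Quotient.mk_add]
      exact (Submodule.Quotient.mk_eq_zero S).mpr (hiii a b)
    exact eq_neg_of_add_eq_zero_left hz
  · intro x y z
    obtain ⟨a, rfl⟩ := Submodule.Quotient.mk_surjective S x
    obtain ⟨b, rfl⟩ := Submodule.Quotient.mk_surjective S y
    obtain ⟨c, rfl⟩ := Submodule.Quotient.mk_surjective S z
    rw [hβ b c, hβ a c, hβ a b, hβ, hβ, hβ, ← Submodule.Quotient.mk_sub]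
    exact congrArg _ (hiv a b c)
  · intro x u w
    obtain ⟨a, rfl⟩ := Submodule.Quotient.mk_surjective S x
    rw [hρ, hρ, hρ]
    exact hii2 a u w
  · intro x
    obtain ⟨a, rfl⟩ := Submodule.Quotient.mk_surjective S x
    ext d
    simp only [LinearMap.comp_apply]
    rw [hρ, hρ]
    exact hii1 a d
  · intro x y
    obtain ⟨a, rfl⟩ := Submodule.Quotient.mk_surjective S x
    obtain ⟨b, rfl⟩ := Submodule.Quotient.mk_surjective S y
    ext d
    rw [hβ]
    simp only [LinearMap.sub_apply, LinearMap.comp_apply]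
    rw [hρ, hρ, hρ, hρ, hρ]
    exact hiv a b d
end DPA
end
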